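/- arXiv:2202.13173 — 4 statements merged into one kernel-verified Lean document; each statement's English description precedes it below -/
import Mathlib

section
/- Let (X_n)_{n≥1} be a sequence of independent, identically distributed real random variables with E[X_1] = 0 and E[|X_1|^{2+ε}] < ∞ for some ε > 0. Then for every ε̄ > 0 there exist constants c > 0 and δ > 0 such that for all n ≥ 1, P(|Σ_{i=1}^{n} X_i| ≥ ε̄ n) ≤ c · n^{-(1+δ)}. -/
open MeasureTheory ProbabilityTheory Filter

lemma sq_sub_le_aux (a b : ℝ) : (a - b)^2 ≤ 2*a^2 + 2*b^2 := by nlinarith [sq_nonneg (a+b)]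

lemma pow4_sub_le_aux (a b : ℝ) : (a - b)^4 ≤ 8*a^4 + 8*b^4 := by
  nlinarith [sq_nonneg (a+b), sq_nonneg (a-b), sq_nonneg (a^2-b^2), sq_nonneg (a^2+b^2),
    sq_nonneg a, sq_nonneg b, sq_nonneg (a*b)]

lemma pow4_le_of_sq_le (m c : ℝ) (h : m^2 ≤ c) : m^4 ≤ c^2 := by nlinarith [sq_nonneg m]


lemma integrable_of_bdd {Ω : Type*} [MeasurableSpace Ω] {μ : Measure Ω} [IsFiniteMeasure μ]
    {f : Ω → ℝ} (hf : Measurable f) {C : ℝ} (h : ∀ ω, |f ω| ≤ C) : Integrable f μ :=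
  (integrable_const C).mono' hf.aestronglyMeasurable (ae_of_all _ fun ω => by
    simpa using h ω)

lemma moments_sum {Ω : Type*} [MeasurableSpace Ω] (μ : Measure Ω) [IsProbabilityMeasure μ]
    (Z : ℕ → Ω → ℝ) (hZm : ∀ i, Measurable (Z i))
    (hZindep : iIndepFun Z μ)
    (hZid : ∀ i k : ℕ, ∫ ω, (Z i ω) ^ k ∂μ = ∫ ω, (Z 0 ω) ^ k ∂μ)
    (B : ℝ) (hB0 : 0 ≤ B) (hB : ∀ i ω, |Z i ω| ≤ B)
    (hmean : ∫ ω, Z 0 ω ∂μ = 0) (n : ℕ) :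
    (∫ ω, (∑ i ∈ Finset.range n, Z i ω) ∂μ = 0) ∧
    (∫ ω, (∑ i ∈ Finset.range n, Z i ω)^2 ∂μ = n * ∫ ω, (Z 0 ω)^2 ∂μ) ∧
    (∫ ω, (∑ i ∈ Finset.range n, Z i ω)^4 ∂μ ≤
      n * ∫ ω, (Z 0 ω)^4 ∂μ + 3 * n^2 * (∫ ω, (Z 0 ω)^2 ∂μ)^2) := by
  induction n with
  | zero => simp
  | succ n IH =>
    obtain ⟨IH1, IH2, IH3⟩ := IH
    set S : Ω → ℝ := fun ω => ∑ i ∈ Finset.range n, Z i ω with hS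
    have hSm : Measurable S := Finset.measurable_sum _ (fun i _ => hZm i)
    have hSb : ∀ ω, |S ω| ≤ n * B := by
      intro ω
      calc |S ω| ≤ ∑ i ∈ Finset.range n, |Z i ω| := Finset.abs_sum_le_sum_abs _ _
        _ ≤ (Finset.range n).card • B :=
          Finset.sum_le_card_nsmul _ _ _ (fun i _ => hB i ω)
        _ = n * B := by simp [nsmul_eq_mul]
    have hind : IndepFun S (Z n) μ := by
      have h := hZindep.indepFun_sum_range_succ hZm n
      have e : (∑ j ∈ Finset.range n, Z j) = S := by
        ext ω; simp [hS, Finset.sum_apply]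
      rwa [e] at h
    have hintSZ : ∀ a b : ℕ, Integrable (fun ω => (S ω)^a * (Z n ω)^b) μ := by
      intro a b
      refine integrable_of_bdd ((hSm.pow_const a).mul ((hZm n).pow_const b))
        (C := (n*B)^a * B^b) (fun ω => ?_)
      rw [abs_mul, abs_pow, abs_pow]
      have h1 : |S ω|^a ≤ (n*B)^a := pow_le_pow_left₀ (abs_nonneg _) (hSb ω) a
      have h2 : |Z n ω|^b ≤ B^b := pow_le_pow_left₀ (abs_nonneg _) (hB n ω) b
      exact mul_le_mul h1 h2 (by positivity) (by positivity)
    have key : ∀ a b : ℕ, ∫ ω, (S ω)^a * (Z n ω)^b ∂μ =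
        (∫ ω, (S ω)^a ∂μ) * (∫ ω, (Z n ω)^b ∂μ) := by
      intro a b
      have h1 : IndepFun (fun ω => (S ω)^a) (fun ω => (Z n ω)^b) μ :=
        hind.comp (measurable_id.pow_const a) (measurable_id.pow_const b)
      exact h1.integral_mul_eq_mul_integral ((hSm.pow_const a)).aestronglyMeasurable
        ((hZm n).pow_const b).aestronglyMeasurable
    have hzid : ∀ k : ℕ, ∫ ω, (Z n ω)^k ∂μ = ∫ ω, (Z 0 ω)^k ∂μ := fun k => hZid n k
    have hz1 : ∫ ω, Z n ω ∂μ = 0 := by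
      have := hzid 1; simp only [pow_one] at this; rw [this, hmean]
    have hintS : ∀ a : ℕ, Integrable (fun ω => (S ω)^a) μ := by
      intro a
      have := hintSZ a 0; simpa using this
    have hintZ : ∀ b : ℕ, Integrable (fun ω => (Z n ω)^b) μ := by
      intro b
      have := hintSZ 0 b; simpa using this
    have hsum : ∀ ω, ∑ i ∈ Finset.range (n+1), Z i ω = S ω + Z n ω := by
      intro ω; rw [Finset.sum_range_succ]
    have hm2 : 0 ≤ ∫ ω, (Z 0 ω)^2 ∂μ := integral_nonneg (fun ω => sq_nonneg _)
    have hm4 : 0 ≤ ∫ ω, (Z 0 ω)^4 ∂μ := integral_nonneg (fun ω => by positivity)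
    refine ⟨?_, ?_, ?_⟩
    · simp_rw [hsum]
      have h1 : ∫ ω, (S ω + Z n ω) ∂μ = ∫ ω, S ω ∂μ + ∫ ω, Z n ω ∂μ :=
        integral_add (by simpa using hintS 1) (by simpa using hintZ 1)
      rw [h1, hz1]
      simpa using IH1
    · simp_rw [hsum]
      have e : ∀ ω, (S ω + Z n ω)^2 = (S ω)^2 + (2 * ((S ω)^1 * (Z n ω)^1) + (Z n ω)^2) := by
        intro ω; ring
      simp_rw [e]
      have h1 : ∫ ω, ((S ω)^2 + (2 * ((S ω)^1 * (Z n ω)^1) + (Z n ω)^2)) ∂μ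
          = ∫ ω, (S ω)^2 ∂μ + ∫ ω, (2 * ((S ω)^1 * (Z n ω)^1) + (Z n ω)^2) ∂μ :=
        integral_add (hintS 2) (((hintSZ 1 1).const_mul 2).add (hintZ 2))
      have h2 : ∫ ω, (2 * ((S ω)^1 * (Z n ω)^1) + (Z n ω)^2) ∂μ
          = ∫ ω, 2 * ((S ω)^1 * (Z n ω)^1) ∂μ + ∫ ω, (Z n ω)^2 ∂μ :=
        integral_add ((hintSZ 1 1).const_mul 2) (hintZ 2)
      have h3 : ∫ ω, 2 * ((S ω)^1 * (Z n ω)^1) ∂μ = 2 * ∫ ω, (S ω)^1 * (Z n ω)^1 ∂μ :=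
        integral_const_mul 2 _
      rw [h1, h2, h3, key 1 1]
      simp only [pow_one]
      rw [hz1, hzid 2]
      have : ∫ ω, (S ω)^2 ∂μ = n * ∫ ω, (Z 0 ω)^2 ∂μ := IH2
      rw [this]
      push_cast; ring
    · simp_rw [hsum]
      have e : ∀ ω, (S ω + Z n ω)^4 = (S ω)^4 + (4 * ((S ω)^3 * (Z n ω)^1) +
          (6 * ((S ω)^2 * (Z n ω)^2) + (4 * ((S ω)^1 * (Z n ω)^3) + (Z n ω)^4))) := by
        intro ω; ring
      simp_rw [e]
      have h1 : ∫ ω, ((S ω)^4 + (4 * ((S ω)^3 * (Z n ω)^1) +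
          (6 * ((S ω)^2 * (Z n ω)^2) + (4 * ((S ω)^1 * (Z n ω)^3) + (Z n ω)^4)))) ∂μ
          = ∫ ω, (S ω)^4 ∂μ + ∫ ω, (4 * ((S ω)^3 * (Z n ω)^1) +
          (6 * ((S ω)^2 * (Z n ω)^2) + (4 * ((S ω)^1 * (Z n ω)^3) + (Z n ω)^4))) ∂μ :=
        integral_add (hintS 4) (((hintSZ 3 1).const_mul 4).add
          (((hintSZ 2 2).const_mul 6).add (((hintSZ 1 3).const_mul 4).add (hintZ 4))))
      have h2 : ∫ ω, (4 * ((S ω)^3 * (Z n ω)^1) +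
          (6 * ((S ω)^2 * (Z n ω)^2) + (4 * ((S ω)^1 * (Z n ω)^3) + (Z n ω)^4))) ∂μ
          = ∫ ω, 4 * ((S ω)^3 * (Z n ω)^1) ∂μ +
          ∫ ω, (6 * ((S ω)^2 * (Z n ω)^2) + (4 * ((S ω)^1 * (Z n ω)^3) + (Z n ω)^4)) ∂μ :=
        integral_add ((hintSZ 3 1).const_mul 4)
          (((hintSZ 2 2).const_mul 6).add (((hintSZ 1 3).const_mul 4).add (hintZ 4)))
      have h3 : ∫ ω, (6 * ((S ω)^2 * (Z n ω)^2) + (4 * ((S ω)^1 * (Z n ω)^3) + (Z n ω)^4)) ∂μ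
          = ∫ ω, 6 * ((S ω)^2 * (Z n ω)^2) ∂μ +
          ∫ ω, (4 * ((S ω)^1 * (Z n ω)^3) + (Z n ω)^4) ∂μ :=
        integral_add ((hintSZ 2 2).const_mul 6) (((hintSZ 1 3).const_mul 4).add (hintZ 4))
      have h4 : ∫ ω, (4 * ((S ω)^1 * (Z n ω)^3) + (Z n ω)^4) ∂μ
          = ∫ ω, 4 * ((S ω)^1 * (Z n ω)^3) ∂μ + ∫ ω, (Z n ω)^4 ∂μ :=
        integral_add ((hintSZ 1 3).const_mul 4) (hintZ 4)
      rw [h1, h2, h3, h4, integral_const_mul, integral_const_mul, integral_const_mul,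
        key 3 1, key 2 2, key 1 3]
      simp only [pow_one]
      rw [hz1, hzid 2, hzid 4]
      have hIS2 : ∫ ω, (S ω)^2 ∂μ = n * ∫ ω, (Z 0 ω)^2 ∂μ := IH2
      rw [hIS2]
      have hn : (0:ℝ) ≤ n := Nat.cast_nonneg n
      have hIS4 : ∫ ω, (S ω)^4 ∂μ ≤
          n * ∫ ω, (Z 0 ω)^4 ∂μ + 3 * (n:ℝ)^2 * (∫ ω, (Z 0 ω)^2 ∂μ)^2 := IH3
      have h5 : 4 * ((∫ ω, S ω ∂μ) * ∫ ω, (Z n ω)^3 ∂μ) = 0 := by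
        rw [show (∫ ω, S ω ∂μ) = 0 from IH1]; ring
      push_cast
      nlinarith [sq_nonneg (∫ ω, (Z 0 ω)^2 ∂μ)]

set_option maxHeartbeats 3200000 in
/-- For an i.i.d. centered sequence `(X n)` with `E[|X|^(2+ε)] < ∞`, for every
`ε̄ > 0` there are `c > 0`, `δ > 0` with `P(|∑_{i=1}^n X i| ≥ ε̄ n) ≤ c n^{-(1+δ)}` for all
`n ≥ 1`. -/
theorem stmt_1 {Ω : Type*} [MeasurableSpace Ω] (μ : Measure Ω) [IsProbabilityMeasure μ]
    (X : ℕ → Ω → ℝ) (hmeas : ∀ n, Measurable (X n))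
    (hindep : iIndepFun X μ)
    (hident : ∀ n, μ.map (X n) = μ.map (X 0))
    (ε : ℝ) (hε : 0 < ε)
    (hmom : Integrable (fun ω => |X 0 ω| ^ (2 + ε)) μ)
    (hmean : ∫ ω, X 0 ω ∂μ = 0)
    (εb : ℝ) (hεb : 0 < εb) :
    ∃ c > (0:ℝ), ∃ δ > (0:ℝ), ∀ n : ℕ, 1 ≤ n →
      (μ {ω | εb * n ≤ |∑ i ∈ Finset.range n, X i ω|}).toReal ≤ c * (n : ℝ) ^ (-(1 + δ)) := by
  set ε' : ℝ := min ε 1 with hε'def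
  have hε'pos : 0 < ε' := lt_min hε one_pos
  have hε'le1 : ε' ≤ 1 := min_le_right _ _
  have hε'leε : ε' ≤ ε := min_le_left _ _
  set p : ℝ := 2 + ε' with hpdef
  have hp2 : 2 ≤ p := by simp [hpdef]; linarith
  have hp0 : 0 < p := by linarith
  -- pointwise domination |x|^p ≤ 1 + |x|^(2+ε)
  have hdom : ∀ x : ℝ, |x| ^ p ≤ 1 + |x| ^ (2 + ε) := by
    intro x
    rcases le_or_gt (|x|) 1 with h | h
    · have h1 : |x| ^ p ≤ 1 := Real.rpow_le_one (abs_nonneg x) h (le_of_lt hp0)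
      have h2 : (0:ℝ) ≤ |x| ^ (2 + ε) := Real.rpow_nonneg (abs_nonneg x) _
      linarith
    · have h1 : |x| ^ p ≤ |x| ^ (2 + ε) :=
        Real.rpow_le_rpow_of_exponent_le (le_of_lt h) (by linarith)
      linarith
  have hrpowm : Measurable fun x : ℝ => x ^ p :=
    (Real.continuous_rpow_const hp0.le).measurable
  have hmeasp : Measurable fun ω => |X 0 ω| ^ p := hrpowm.comp (hmeas 0).abs
  have hintp : Integrable (fun ω => |X 0 ω| ^ p) μ := by
    refine ((integrable_const (1:ℝ)).add hmom).mono' hmeasp.aestronglyMeasurable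
      (ae_of_all _ fun ω => ?_)
    rw [Real.norm_eq_abs, abs_of_nonneg (Real.rpow_nonneg (abs_nonneg _) _)]
    exact hdom _
  set K : ℝ := ∫ ω, |X 0 ω| ^ p ∂μ with hKdef
  have hK0 : 0 ≤ K := integral_nonneg fun ω => Real.rpow_nonneg (abs_nonneg _) _
  have hX0int : Integrable (X 0) μ := by
    refine ((integrable_const (1:ℝ)).add hintp).mono' (hmeas 0).aestronglyMeasurable
      (ae_of_all _ fun ω => ?_)
    simp only [Pi.add_apply, Real.norm_eq_abs]
    rcases le_or_gt (|X 0 ω|) 1 with h | h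
    · have : (0:ℝ) ≤ |X 0 ω| ^ p := Real.rpow_nonneg (abs_nonneg _) _
      linarith
    · have h2 : |X 0 ω| ^ (1:ℝ) ≤ |X 0 ω| ^ p :=
        Real.rpow_le_rpow_of_exponent_le (le_of_lt h) (by linarith)
      rw [Real.rpow_one] at h2
      linarith
  set n0 : ℕ := max 1 ⌈2 * K / εb⌉₊ with hn0def
  have hn0ge1 : 1 ≤ n0 := le_max_left _ _
  set D : ℝ := 8 * K + 56 * (1 + K)^2 with hDdef
  have hD0 : 0 ≤ D := by positivity
  set C2 : ℝ := D * (2 / εb)^4 with hC2def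
  have hC20 : 0 ≤ C2 := by positivity
  set c : ℝ := K + C2 + (n0:ℝ) ^ (1 + ε') with hcdef
  have hcpos : 0 < c := by
    have : (0:ℝ) < (n0:ℝ) ^ (1 + ε') :=
      Real.rpow_pos_of_pos (by exact_mod_cast hn0ge1 : (0:ℝ) < n0) _
    positivity
  refine ⟨c, hcpos, ε', hε'pos, fun n hn1 => ?_⟩
  have hnpos : (0:ℝ) < n := by exact_mod_cast hn1
  have hn1R : (1:ℝ) ≤ n := by exact_mod_cast hn1
  have hnegpow : (0:ℝ) < (n:ℝ) ^ (-(1 + ε')) := Real.rpow_pos_of_pos hnpos _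
  rcases lt_or_ge n n0 with hsmall | hbig
  · -- small n : trivial bound
    have hP1 : (μ {ω | εb * n ≤ |∑ i ∈ Finset.range n, X i ω|}).toReal ≤ 1 := by
      rw [← ENNReal.toReal_one]
      exact ENNReal.toReal_mono ENNReal.one_ne_top prob_le_one
    have h2 : (1:ℝ) ≤ (n0:ℝ) ^ (1 + ε') * (n:ℝ) ^ (-(1 + ε')) := by
      have hx : (n:ℝ) ^ (1 + ε') ≤ (n0:ℝ) ^ (1 + ε') :=
        Real.rpow_le_rpow (le_of_lt hnpos) (by exact_mod_cast le_of_lt hsmall) (by linarith)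
      have hy : (n:ℝ) ^ (1 + ε') * (n:ℝ) ^ (-(1 + ε')) = 1 := by
        rw [← Real.rpow_add hnpos, show (1 + ε') + -(1 + ε') = 0 by ring, Real.rpow_zero]
      calc (1:ℝ) = (n:ℝ) ^ (1 + ε') * (n:ℝ) ^ (-(1 + ε')) := hy.symm
        _ ≤ (n0:ℝ) ^ (1 + ε') * (n:ℝ) ^ (-(1 + ε')) := by
            exact mul_le_mul_of_nonneg_right hx (le_of_lt hnegpow)
    calc (μ {ω | εb * n ≤ |∑ i ∈ Finset.range n, X i ω|}).toReal ≤ 1 := hP1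
      _ ≤ (n0:ℝ) ^ (1 + ε') * (n:ℝ) ^ (-(1 + ε')) := h2
      _ ≤ c * (n:ℝ) ^ (-(1 + ε')) := by
          refine mul_le_mul_of_nonneg_right ?_ (le_of_lt hnegpow)
          rw [hcdef]; linarith
  · -- large n
    have hKn : K ≤ εb * n / 2 := by
      have h1 : 2 * K / εb ≤ (⌈2 * K / εb⌉₊ : ℝ) := Nat.le_ceil _
      have h2 : ((⌈2 * K / εb⌉₊ : ℕ) : ℝ) ≤ (n0 : ℝ) := by
        exact_mod_cast le_max_right 1 ⌈2 * K / εb⌉₊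
      have h3 : (n0 : ℝ) ≤ (n : ℝ) := by exact_mod_cast hbig
      have h4 : 2 * K / εb ≤ (n : ℝ) := by linarith
      rw [div_le_iff₀ hεb] at h4
      linarith
    set ψ : ℝ → ℝ := fun x => if |x| ≤ (n:ℝ) then x else 0 with hψdef
    have hψm : Measurable ψ :=
      Measurable.ite (measurableSet_le measurable_abs measurable_const)
        measurable_id measurable_const
    have hψb : ∀ x, |ψ x| ≤ n := by
      intro x
      rw [hψdef]
      dsimp only
      split
      · assumption
      · simpa using le_of_lt hnpos
    have hψle : ∀ x, |ψ x| ≤ |x| := by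
      intro x
      rw [hψdef]
      dsimp only
      split
      · exact le_rfl
      · simp [abs_nonneg]
    have hψd : ∀ x, |ψ x - x| ≤ |x| ^ p / n := by
      intro x
      rw [hψdef]
      dsimp only
      split
      · simpa using div_nonneg (Real.rpow_nonneg (abs_nonneg x) p) (le_of_lt hnpos)
      · rename_i hx
        push_neg at hx
        rw [zero_sub, abs_neg]
        rw [le_div_iff₀ hnpos]
        have h1 : (1:ℝ) ≤ |x| := le_trans hn1R (le_of_lt hx)
        have h2 : |x| ^ (1:ℝ) ≤ |x| ^ (p - 1) :=
          Real.rpow_le_rpow_of_exponent_le h1 (by rw [hpdef]; linarith)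
        rw [Real.rpow_one] at h2
        have h3 : (n:ℝ) ≤ |x| ^ (p - 1) := le_trans (le_of_lt hx) h2
        have h4 : |x| ^ p = |x| ^ (p - 1) * |x| := by
          have e : p - 1 + 1 = p := by ring
          have h5 := Real.rpow_add' (abs_nonneg x) (by rw [e, hpdef]; positivity : p - 1 + 1 ≠ 0)
          rw [e, Real.rpow_one] at h5
          exact h5
        rw [h4]
        calc |x| * (n:ℝ) ≤ |x| * (|x| ^ (p - 1)) :=
              mul_le_mul_of_nonneg_left h3 (abs_nonneg x)
          _ = |x| ^ (p - 1) * |x| := by ring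
    have hY0m : Measurable fun ω => ψ (X 0 ω) := hψm.comp (hmeas 0)
    have hY0int : Integrable (fun ω => ψ (X 0 ω)) μ :=
      integrable_of_bdd hY0m (fun ω => hψb _)
    set m : ℝ := ∫ ω, ψ (X 0 ω) ∂μ with hmdef
    have hmabs : |m| ≤ K / n := by
      have e1 : ∫ ω, (ψ (X 0 ω) - X 0 ω) ∂μ = m := by
        rw [integral_sub hY0int hX0int, hmean, sub_zero]
      have e2 : |∫ ω, (ψ (X 0 ω) - X 0 ω) ∂μ| ≤ ∫ ω, |ψ (X 0 ω) - X 0 ω| ∂μ := by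
        simpa [Real.norm_eq_abs] using
          norm_integral_le_integral_norm (μ := μ) (fun ω => ψ (X 0 ω) - X 0 ω)
      have e3 : ∫ ω, |ψ (X 0 ω) - X 0 ω| ∂μ ≤ ∫ ω, |X 0 ω| ^ p / n ∂μ :=
        integral_mono (hY0int.sub hX0int).abs (hintp.div_const _) (fun ω => hψd _)
      have e4 : ∫ ω, |X 0 ω| ^ p / n ∂μ = K / n := integral_div _ _
      rw [e1] at e2
      linarith
    have hmn : |m| ≤ n := by
      have e2 : |m| ≤ ∫ ω, |ψ (X 0 ω)| ∂μ := by
        simpa [Real.norm_eq_abs] using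
          norm_integral_le_integral_norm (μ := μ) (fun ω => ψ (X 0 ω))
      have e3 : ∫ ω, |ψ (X 0 ω)| ∂μ ≤ ∫ ω, (n:ℝ) ∂μ :=
        integral_mono hY0int.abs (integrable_const _) (fun ω => hψb _)
      have e4 : ∫ ω, (n:ℝ) ∂μ = n := by simp
      linarith
    set g : ℝ → ℝ := fun x => ψ x - m with hgdef
    set Z : ℕ → Ω → ℝ := fun i => g ∘ X i with hZdef
    have hgm : Measurable g := hψm.sub measurable_const
    have hZm : ∀ i, Measurable (Z i) := fun i => hgm.comp (hmeas i)
    have hZindep : iIndepFun Z μ :=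
      hindep.comp (fun _ => g) (fun _ => hgm)
    have hZapp : ∀ i ω, Z i ω = ψ (X i ω) - m := fun i ω => rfl
    have hZid : ∀ i k : ℕ, ∫ ω, (Z i ω) ^ k ∂μ = ∫ ω, (Z 0 ω) ^ k ∂μ := by
      intro i k
      have hgk : Measurable fun x => (g x) ^ k := hgm.pow_const k
      have e1 : ∫ ω, (Z i ω) ^ k ∂μ = ∫ x, (g x) ^ k ∂(μ.map (X i)) :=
        (integral_map (hmeas i).aemeasurable hgk.aestronglyMeasurable).symm
      have e2 : ∫ ω, (Z 0 ω) ^ k ∂μ = ∫ x, (g x) ^ k ∂(μ.map (X 0)) :=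
        (integral_map (hmeas 0).aemeasurable hgk.aestronglyMeasurable).symm
      rw [e1, e2, hident i]
    have hB : ∀ i ω, |Z i ω| ≤ 2 * n := by
      intro i ω
      rw [hZapp i ω, sub_eq_add_neg]
      calc |ψ (X i ω) + -m| ≤ |ψ (X i ω)| + |-m| := abs_add_le _ _
        _ ≤ n + n := by rw [abs_neg]; exact add_le_add (hψb _) hmn
        _ = 2 * n := by ring
    have hZmean : ∫ ω, Z 0 ω ∂μ = 0 := by
      have e1 : ∫ ω, (ψ (X 0 ω) - m) ∂μ = m - m := by
        rw [integral_sub hY0int (integrable_const m), integral_const]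
        simp [hmdef]
      rw [sub_self] at e1; exact e1
    obtain ⟨-, hm2sum, hm4sum⟩ :=
      moments_sum μ Z hZm hZindep hZid (2 * n) (by positivity) hB hZmean n
    set m2 : ℝ := ∫ ω, (Z 0 ω) ^ 2 ∂μ with hm2def
    set m4 : ℝ := ∫ ω, (Z 0 ω) ^ 4 ∂μ with hm4def
    have hm2nn : 0 ≤ m2 := integral_nonneg fun ω => sq_nonneg _
    -- second moment of truncation
    have hsqpt : ∀ x : ℝ, x ^ 2 ≤ 1 + |x| ^ p := by
      intro x
      rcases le_or_gt (|x|) 1 with h | h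
      · have h1 : x ^ 2 = |x| ^ 2 := (sq_abs x).symm
        have h2 : |x| ^ 2 ≤ 1 := pow_le_one₀ (abs_nonneg x) h
        have h3 : (0:ℝ) ≤ |x| ^ p := Real.rpow_nonneg (abs_nonneg x) _
        linarith
      · have h1 : x ^ 2 = |x| ^ (2:ℕ) := (sq_abs x).symm
        have h2 : |x| ^ ((2:ℕ):ℝ) ≤ |x| ^ p :=
          Real.rpow_le_rpow_of_exponent_le (le_of_lt h) (by push_cast; linarith)
        rw [Real.rpow_natCast] at h2
        linarith [h1 ▸ h2]
    have hY2int : Integrable (fun ω => (ψ (X 0 ω)) ^ 2) μ := by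
      refine integrable_of_bdd (hY0m.pow_const 2) (C := (n:ℝ)^2) (fun ω => ?_)
      rw [abs_pow]
      exact pow_le_pow_left₀ (abs_nonneg _) (hψb _) 2
    have hY2le : ∫ ω, (ψ (X 0 ω)) ^ 2 ∂μ ≤ 1 + K := by
      have pt : ∀ ω, (ψ (X 0 ω)) ^ 2 ≤ 1 + |X 0 ω| ^ p := by
        intro ω
        have h1 : (ψ (X 0 ω)) ^ 2 = |ψ (X 0 ω)| ^ 2 := (sq_abs _).symm
        have h2 : |ψ (X 0 ω)| ^ 2 ≤ |X 0 ω| ^ 2 :=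
          pow_le_pow_left₀ (abs_nonneg _) (hψle _) 2
        have h3 : |X 0 ω| ^ 2 = (X 0 ω) ^ 2 := sq_abs _
        have h4 := hsqpt (X 0 ω)
        linarith
      calc ∫ ω, (ψ (X 0 ω)) ^ 2 ∂μ ≤ ∫ ω, (1 + |X 0 ω| ^ p) ∂μ :=
            integral_mono hY2int ((integrable_const 1).add hintp) pt
        _ = 1 + K := by
            rw [integral_add (integrable_const 1) hintp, integral_const]
            simp [hKdef]
    have hY0L2 : MemLp (fun ω => ψ (X 0 ω)) 2 μ :=
      (memLp_top_of_bound hY0m.aestronglyMeasurable (n:ℝ)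
        (ae_of_all _ fun ω => by
          rw [Real.norm_eq_abs]; exact hψb _)).mono_exponent le_top
    have hmsq : m ^ 2 ≤ 1 + K := by
      have hv := variance_nonneg (fun ω => ψ (X 0 ω)) μ
      rw [variance_eq_sub hY0L2] at hv
      have hv2 : m ^ 2 ≤ ∫ ω, (ψ (X 0 ω)) ^ 2 ∂μ := by
        have e : μ[(fun ω => ψ (X 0 ω)) ^ 2] = ∫ ω, (ψ (X 0 ω)) ^ 2 ∂μ := by
          congr 1
        have e2 : μ[fun ω => ψ (X 0 ω)] = m := rfl
        rw [e, e2] at hv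
        linarith
      linarith
    have hZ0sq_int : Integrable (fun ω => (Z 0 ω) ^ 2) μ := by
      refine integrable_of_bdd ((hZm 0).pow_const 2) (C := (2*(n:ℝ))^2) (fun ω => ?_)
      rw [abs_pow]
      exact pow_le_pow_left₀ (abs_nonneg _) (hB 0 ω) 2
    have hm2le : m2 ≤ 4 * (1 + K) := by
      have pt : ∀ ω, (Z 0 ω) ^ 2 ≤ 2 * (ψ (X 0 ω)) ^ 2 + 2 * m ^ 2 := by
        intro ω
        rw [hZapp 0 ω]
        exact sq_sub_le_aux _ _
      have h1 : m2 ≤ ∫ ω, (2 * (ψ (X 0 ω)) ^ 2 + 2 * m ^ 2) ∂μ :=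
        integral_mono hZ0sq_int ((hY2int.const_mul 2).add (integrable_const _)) pt
      have h2 : ∫ ω, (2 * (ψ (X 0 ω)) ^ 2 + 2 * m ^ 2) ∂μ
          = 2 * (∫ ω, (ψ (X 0 ω)) ^ 2 ∂μ) + 2 * m ^ 2 := by
        rw [integral_add (hY2int.const_mul 2) (integrable_const _),
          integral_const_mul, integral_const]
        simp
      rw [h2] at h1
      linarith
    -- fourth moment of truncation
    have hY4int : Integrable (fun ω => (ψ (X 0 ω)) ^ 4) μ := by
      refine integrable_of_bdd (hY0m.pow_const 4) (C := (n:ℝ)^4) (fun ω => ?_)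
      rw [abs_pow]
      exact pow_le_pow_left₀ (abs_nonneg _) (hψb _) 4
    have hY4le : ∫ ω, (ψ (X 0 ω)) ^ 4 ∂μ ≤ (n:ℝ) ^ ((2:ℝ) - ε') * K := by
      have pt : ∀ ω, (ψ (X 0 ω)) ^ 4 ≤ (n:ℝ) ^ ((2:ℝ) - ε') * |X 0 ω| ^ p := by
        intro ω
        by_cases h : |X 0 ω| ≤ (n:ℝ)
        · have hψx : ψ (X 0 ω) = X 0 ω := if_pos h
          rw [hψx]
          have e1 : (X 0 ω) ^ 4 = |X 0 ω| ^ (4:ℕ) := by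
            rw [← abs_pow]
            exact (abs_of_nonneg (by positivity)).symm
          have e3 : ((4:ℕ):ℝ) = ((2:ℝ) - ε') + p := by rw [hpdef]; push_cast; ring
          have e4 : |X 0 ω| ^ (((2:ℝ) - ε') + p) = |X 0 ω| ^ ((2:ℝ) - ε') * |X 0 ω| ^ p :=
            Real.rpow_add' (abs_nonneg _) (by rw [← e3]; norm_num)
          have e5 : |X 0 ω| ^ ((2:ℝ) - ε') ≤ (n:ℝ) ^ ((2:ℝ) - ε') :=
            Real.rpow_le_rpow (abs_nonneg _) h (by linarith)
          calc (X 0 ω) ^ 4 = |X 0 ω| ^ ((2:ℝ) - ε') * |X 0 ω| ^ p := by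
                rw [e1, ← Real.rpow_natCast (|X 0 ω|) 4, e3, e4]
            _ ≤ (n:ℝ) ^ ((2:ℝ) - ε') * |X 0 ω| ^ p :=
                mul_le_mul_of_nonneg_right e5 (Real.rpow_nonneg (abs_nonneg _) _)
        · have hψx : ψ (X 0 ω) = 0 := if_neg h
          rw [hψx]
          have : (0:ℝ) ≤ (n:ℝ) ^ ((2:ℝ) - ε') * |X 0 ω| ^ p :=
            mul_nonneg (Real.rpow_nonneg (le_of_lt hnpos) _)
              (Real.rpow_nonneg (abs_nonneg _) _)
          simpa using this
      calc ∫ ω, (ψ (X 0 ω)) ^ 4 ∂μ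
          ≤ ∫ ω, (n:ℝ) ^ ((2:ℝ) - ε') * |X 0 ω| ^ p ∂μ :=
            integral_mono hY4int (hintp.const_mul _) pt
        _ = (n:ℝ) ^ ((2:ℝ) - ε') * K := by rw [integral_const_mul, hKdef]
    have hZ0q_int : Integrable (fun ω => (Z 0 ω) ^ 4) μ := by
      refine integrable_of_bdd ((hZm 0).pow_const 4) (C := (2*(n:ℝ))^4) (fun ω => ?_)
      rw [abs_pow]
      exact pow_le_pow_left₀ (abs_nonneg _) (hB 0 ω) 4
    have hm4le : m4 ≤ 8 * ((n:ℝ) ^ ((2:ℝ) - ε') * K) + 8 * (1 + K) ^ 2 := by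
      have pt : ∀ ω, (Z 0 ω) ^ 4 ≤ 8 * (ψ (X 0 ω)) ^ 4 + 8 * m ^ 4 := by
        intro ω
        rw [hZapp 0 ω]
        exact pow4_sub_le_aux _ _
      have h1 : m4 ≤ ∫ ω, (8 * (ψ (X 0 ω)) ^ 4 + 8 * m ^ 4) ∂μ :=
        integral_mono hZ0q_int ((hY4int.const_mul 8).add (integrable_const _)) pt
      have h2 : ∫ ω, (8 * (ψ (X 0 ω)) ^ 4 + 8 * m ^ 4) ∂μ
          = 8 * (∫ ω, (ψ (X 0 ω)) ^ 4 ∂μ) + 8 * m ^ 4 := by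
        rw [integral_add (hY4int.const_mul 8) (integrable_const _),
          integral_const_mul, integral_const]
        simp
      have h3 : m ^ 4 ≤ (1 + K) ^ 2 := pow4_le_of_sq_le m (1 + K) hmsq
      rw [h2] at h1
      linarith
    -- sum of Z
    set T : Ω → ℝ := fun ω => ∑ i ∈ Finset.range n, Z i ω with hTdef
    have hTm : Measurable T := Finset.measurable_sum _ (fun i _ => hZm i)
    have hTb : ∀ ω, |T ω| ≤ n * (2 * n) := by
      intro ω
      calc |T ω| ≤ ∑ i ∈ Finset.range n, |Z i ω| := Finset.abs_sum_le_sum_abs _ _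
        _ ≤ (Finset.range n).card • (2 * (n:ℝ)) :=
          Finset.sum_le_card_nsmul _ _ _ (fun i _ => hB i ω)
        _ = n * (2 * n) := by simp [nsmul_eq_mul]
    have hT4int : Integrable (fun ω => (T ω) ^ 4) μ := by
      refine integrable_of_bdd (hTm.pow_const 4) (C := ((n:ℝ) * (2*n))^4) (fun ω => ?_)
      rw [abs_pow]
      exact pow_le_pow_left₀ (abs_nonneg _) (hTb ω) 4
    -- rpow comparisons
    have hn3 : (n:ℝ) * ((n:ℝ) ^ ((2:ℝ) - ε')) = (n:ℝ) ^ ((3:ℝ) - ε') := by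
      have e := (Real.rpow_add hnpos 1 ((2:ℝ) - ε')).symm
      rw [Real.rpow_one] at e
      rw [e]
      congr 1
      ring
    have hnle2 : (n:ℝ) ≤ (n:ℝ) ^ ((3:ℝ) - ε') := by
      have := Real.rpow_le_rpow_of_exponent_le hn1R (by linarith : (1:ℝ) ≤ (3:ℝ) - ε')
      rwa [Real.rpow_one] at this
    have hnle3 : (n:ℝ) ^ (2:ℕ) ≤ (n:ℝ) ^ ((3:ℝ) - ε') := by
      have := Real.rpow_le_rpow_of_exponent_le hn1R (by push_cast; linarith : ((2:ℕ):ℝ) ≤ (3:ℝ) - ε')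
      rwa [Real.rpow_natCast] at this
    have hT4le : ∫ ω, (T ω) ^ 4 ∂μ ≤ D * (n:ℝ) ^ ((3:ℝ) - ε') := by
      have step1 : ∫ ω, (T ω) ^ 4 ∂μ ≤ (n:ℝ) * m4 + 3 * (n:ℝ)^2 * m2^2 := hm4sum
      have step2 : (n:ℝ) * m4 ≤ (n:ℝ) * (8 * ((n:ℝ) ^ ((2:ℝ) - ε') * K) + 8 * (1 + K) ^ 2) :=
        mul_le_mul_of_nonneg_left hm4le (le_of_lt hnpos)
      have step3 : m2 ^ 2 ≤ (4 * (1 + K)) ^ 2 := pow_le_pow_left₀ hm2nn hm2le 2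
      have step4 : 3 * (n:ℝ)^2 * m2^2 ≤ 3 * (n:ℝ)^2 * (4 * (1 + K))^2 :=
        mul_le_mul_of_nonneg_left step3 (by positivity)
      have e1 : (n:ℝ) * (8 * ((n:ℝ) ^ ((2:ℝ) - ε') * K) + 8 * (1 + K) ^ 2)
          = 8 * K * ((n:ℝ) * ((n:ℝ) ^ ((2:ℝ) - ε'))) + 8 * (1 + K) ^ 2 * (n:ℝ) := by ring
      have e2 : 3 * (n:ℝ)^2 * (4 * (1 + K))^2 = 48 * (1 + K)^2 * (n:ℝ)^(2:ℕ) := by ring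
      have f1 : 8 * K * ((n:ℝ) * ((n:ℝ) ^ ((2:ℝ) - ε'))) = 8 * K * (n:ℝ) ^ ((3:ℝ) - ε') := by
        rw [hn3]
      have f2 : 8 * (1 + K) ^ 2 * (n:ℝ) ≤ 8 * (1 + K) ^ 2 * (n:ℝ) ^ ((3:ℝ) - ε') :=
        mul_le_mul_of_nonneg_left hnle2 (by positivity)
      have f3 : 48 * (1 + K)^2 * (n:ℝ)^(2:ℕ) ≤ 48 * (1 + K)^2 * (n:ℝ) ^ ((3:ℝ) - ε') :=
        mul_le_mul_of_nonneg_left hnle3 (by positivity)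
      have : ∫ ω, (T ω) ^ 4 ∂μ ≤
          8 * K * (n:ℝ) ^ ((3:ℝ) - ε') + 8 * (1 + K) ^ 2 * (n:ℝ) ^ ((3:ℝ) - ε')
            + 48 * (1 + K)^2 * (n:ℝ) ^ ((3:ℝ) - ε') := by
        calc ∫ ω, (T ω) ^ 4 ∂μ ≤ (n:ℝ) * m4 + 3 * (n:ℝ)^2 * m2^2 := step1
          _ ≤ (8 * K * ((n:ℝ) * ((n:ℝ) ^ ((2:ℝ) - ε'))) + 8 * (1 + K) ^ 2 * (n:ℝ))
              + 48 * (1 + K)^2 * (n:ℝ)^(2:ℕ) := by rw [← e1, ← e2]; linarith [step2, step4]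
          _ ≤ _ := by rw [f1]; linarith [f2, f3]
      calc ∫ ω, (T ω) ^ 4 ∂μ ≤ _ := this
        _ = D * (n:ℝ) ^ ((3:ℝ) - ε') := by rw [hDdef]; ring
    -- Chebyshev-type bound on T
    set lvl : ℝ := (εb * n / 2) ^ 4 with hlvldef
    have hlvlpos : 0 < lvl := by rw [hlvldef]; positivity
    have hcheb := mul_meas_ge_le_integral_of_nonneg
      (ae_of_all μ (fun ω => by positivity : ∀ ω, (0:ℝ) ≤ (T ω)^4)) hT4int lvl
    have hPE2 : (μ {ω | lvl ≤ (T ω) ^ 4}).toReal ≤ C2 * (n:ℝ) ^ (-(1 + ε')) := by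
      have h1 : (μ {ω | lvl ≤ (T ω) ^ 4}).toReal ≤ D * (n:ℝ) ^ ((3:ℝ) - ε') / lvl := by
        rw [le_div_iff₀ hlvlpos, mul_comm]
        exact le_trans hcheb hT4le
      have h2 : D * (n:ℝ) ^ ((3:ℝ) - ε') / lvl = C2 * (n:ℝ) ^ (-(1 + ε')) := by
        have e1 : lvl = (εb / 2) ^ 4 * (n:ℝ) ^ (4:ℕ) := by rw [hlvldef]; ring
        have e2 : (n:ℝ) ^ ((3:ℝ) - ε') = (n:ℝ) ^ (-(1 + ε')) * (n:ℝ) ^ (4:ℕ) := by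
          rw [← Real.rpow_natCast (n:ℝ) 4, ← Real.rpow_add hnpos]
          congr 1
          push_cast
          ring
        rw [hC2def, e1, e2]
        have hb4 : ((εb / 2) ^ 4 : ℝ) ≠ 0 := by positivity
        have hn4 : ((n:ℝ) ^ (4:ℕ)) ≠ 0 := by positivity
        field_simp
      rw [← h2]
      exact h1
    -- tail bound
    have htail : ∀ i, (μ {ω | (n:ℝ) < |X i ω|}).toReal ≤ K / (n:ℝ) ^ p := by
      intro i
      have hs : MeasurableSet {x : ℝ | (n:ℝ) < |x|} :=
        measurableSet_lt measurable_const measurable_abs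
      have hmapeq : μ {ω | (n:ℝ) < |X i ω|} = μ {ω | (n:ℝ) < |X 0 ω|} := by
        have e1 : μ {ω | (n:ℝ) < |X i ω|} = μ.map (X i) {x | (n:ℝ) < |x|} := by
          rw [Measure.map_apply (hmeas i) hs]; rfl
        have e2 : μ {ω | (n:ℝ) < |X 0 ω|} = μ.map (X 0) {x | (n:ℝ) < |x|} := by
          rw [Measure.map_apply (hmeas 0) hs]; rfl
        rw [e1, e2, hident i]
      rw [hmapeq]
      have hsub : {ω | (n:ℝ) < |X 0 ω|} ⊆ {ω | (n:ℝ) ^ p ≤ |X 0 ω| ^ p} := by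
        intro ω hω
        exact Real.rpow_le_rpow (le_of_lt hnpos) (le_of_lt hω) (le_of_lt hp0)
      have h1 : (μ {ω | (n:ℝ) < |X 0 ω|}).toReal
          ≤ (μ {ω | (n:ℝ) ^ p ≤ |X 0 ω| ^ p}).toReal :=
        ENNReal.toReal_mono (measure_ne_top _ _) (measure_mono hsub)
      have h2 := mul_meas_ge_le_integral_of_nonneg
        (ae_of_all μ (fun ω => Real.rpow_nonneg (abs_nonneg _) _)) hintp ((n:ℝ) ^ p)
      have hnppos : (0:ℝ) < (n:ℝ) ^ p := Real.rpow_pos_of_pos hnpos _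
      have h3 : (μ {ω | (n:ℝ) ^ p ≤ |X 0 ω| ^ p}).toReal ≤ K / (n:ℝ) ^ p := by
        rw [le_div_iff₀ hnppos, mul_comm]
        exact h2
      linarith
    have htailsum : ∑ i ∈ Finset.range n, (μ {ω | (n:ℝ) < |X i ω|}).toReal
        ≤ K * (n:ℝ) ^ (-(1 + ε')) := by
      have h1 : ∑ i ∈ Finset.range n, (μ {ω | (n:ℝ) < |X i ω|}).toReal
          ≤ (Finset.range n).card • (K / (n:ℝ) ^ p) :=
        Finset.sum_le_card_nsmul _ _ _ (fun i _ => htail i)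
      have h2 : ((Finset.range n).card : ℝ) • (K / (n:ℝ) ^ p) = (n:ℝ) * (K / (n:ℝ) ^ p) := by
        simp [nsmul_eq_mul]
      have h3 : (n:ℝ) * (K / (n:ℝ) ^ p) = K * ((n:ℝ) / (n:ℝ) ^ p) := by ring
      have h4 : (n:ℝ) / (n:ℝ) ^ p = (n:ℝ) ^ (-(1 + ε')) := by
        rw [show ((n:ℝ) / (n:ℝ) ^ p) = (n:ℝ) ^ (1:ℝ) / (n:ℝ) ^ p by rw [Real.rpow_one],
          ← Real.rpow_sub hnpos]
        congr 1
        rw [hpdef]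
        ring
      calc ∑ i ∈ Finset.range n, (μ {ω | (n:ℝ) < |X i ω|}).toReal
          ≤ (Finset.range n).card • (K / (n:ℝ) ^ p) := h1
        _ = (n:ℝ) * (K / (n:ℝ) ^ p) := by simp [nsmul_eq_mul]
        _ = K * ((n:ℝ) ^ (-(1 + ε'))) := by rw [h3, h4]
    -- event inclusion
    have hsub2 : {ω | εb * n ≤ |∑ i ∈ Finset.range n, X i ω|} ⊆
        (⋃ i ∈ Finset.range n, {ω | (n:ℝ) < |X i ω|}) ∪ {ω | lvl ≤ (T ω) ^ 4} := by
      intro ω hω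
      by_cases hc : ∃ i ∈ Finset.range n, (n:ℝ) < |X i ω|
      · left
        obtain ⟨i, hi, hxi⟩ := hc
        exact Set.mem_biUnion hi hxi
      · right
        push_neg at hc
        have hψeq : ∀ i ∈ Finset.range n, ψ (X i ω) = X i ω := fun i hi => if_pos (hc i hi)
        have hTeq : T ω = (∑ i ∈ Finset.range n, X i ω) - n * m := by
          rw [hTdef]
          calc ∑ i ∈ Finset.range n, Z i ω
              = ∑ i ∈ Finset.range n, (X i ω - m) :=
                Finset.sum_congr rfl (fun i hi => by rw [hZapp i ω, hψeq i hi])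
            _ = (∑ i ∈ Finset.range n, X i ω) - n * m := by
                rw [Finset.sum_sub_distrib, Finset.sum_const, Finset.card_range, nsmul_eq_mul]
        have hS : εb * n ≤ |∑ i ∈ Finset.range n, X i ω| := hω
        have hnm : |(n:ℝ) * m| ≤ εb * n / 2 := by
          rw [abs_mul, abs_of_nonneg (le_of_lt hnpos)]
          have h1 : (n:ℝ) * |m| ≤ (n:ℝ) * (K / n) :=
            mul_le_mul_of_nonneg_left hmabs (le_of_lt hnpos)
          have h2 : (n:ℝ) * (K / n) = K := by field_simp
          linarith
        have hTabs : εb * n / 2 ≤ |T ω| := by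
          have e : (∑ i ∈ Finset.range n, X i ω) = T ω + n * m := by rw [hTeq]; ring
          have h1 : |∑ i ∈ Finset.range n, X i ω| ≤ |T ω| + |(n:ℝ) * m| := by
            rw [e]; exact abs_add_le _ _
          linarith
        have h4 : (εb * n / 2) ^ 4 ≤ |T ω| ^ 4 :=
          pow_le_pow_left₀ (by positivity) hTabs 4
        have h5 : |T ω| ^ 4 = (T ω) ^ 4 := by
          rw [← abs_pow]
          exact abs_of_nonneg (by positivity)
        show lvl ≤ (T ω) ^ 4
        rw [hlvldef]
        linarith
    -- final assembly
    have hU := measure_biUnion_finset_le (μ := μ) (Finset.range n)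
      (fun i => {ω | (n:ℝ) < |X i ω|})
    have hfin1 : (∑ i ∈ Finset.range n, μ {ω | (n:ℝ) < |X i ω|}) ≠ ⊤ :=
      (ENNReal.sum_lt_top.mpr (fun i _ => measure_lt_top μ _)).ne
    calc (μ {ω | εb * n ≤ |∑ i ∈ Finset.range n, X i ω|}).toReal
        ≤ (μ ((⋃ i ∈ Finset.range n, {ω | (n:ℝ) < |X i ω|}) ∪ {ω | lvl ≤ (T ω) ^ 4})).toReal :=
          ENNReal.toReal_mono (measure_ne_top _ _) (measure_mono hsub2)
      _ ≤ (μ (⋃ i ∈ Finset.range n, {ω | (n:ℝ) < |X i ω|})).toReal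
          + (μ {ω | lvl ≤ (T ω) ^ 4}).toReal := by
          have hle := measure_union_le (μ := μ)
            (⋃ i ∈ Finset.range n, {ω | (n:ℝ) < |X i ω|}) {ω | lvl ≤ (T ω) ^ 4}
          calc (μ ((⋃ i ∈ Finset.range n, {ω | (n:ℝ) < |X i ω|}) ∪ {ω | lvl ≤ (T ω) ^ 4})).toReal
              ≤ ((μ (⋃ i ∈ Finset.range n, {ω | (n:ℝ) < |X i ω|}))
                + μ {ω | lvl ≤ (T ω) ^ 4}).toReal :=
                ENNReal.toReal_mono
                  (ENNReal.add_ne_top.mpr ⟨measure_ne_top _ _, measure_ne_top _ _⟩) hle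
            _ = _ := ENNReal.toReal_add (measure_ne_top _ _) (measure_ne_top _ _)
      _ ≤ (∑ i ∈ Finset.range n, (μ {ω | (n:ℝ) < |X i ω|}).toReal)
          + (μ {ω | lvl ≤ (T ω) ^ 4}).toReal := by
          have h1 : (μ (⋃ i ∈ Finset.range n, {ω | (n:ℝ) < |X i ω|})).toReal
              ≤ (∑ i ∈ Finset.range n, μ {ω | (n:ℝ) < |X i ω|}).toReal :=
            ENNReal.toReal_mono hfin1 hU
          have h2 : (∑ i ∈ Finset.range n, μ {ω | (n:ℝ) < |X i ω|}).toReal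
              = ∑ i ∈ Finset.range n, (μ {ω | (n:ℝ) < |X i ω|}).toReal :=
            ENNReal.toReal_sum (fun i _ => measure_ne_top _ _)
          linarith [h1, h2 ▸ h1]
      _ ≤ K * (n:ℝ) ^ (-(1 + ε')) + C2 * (n:ℝ) ^ (-(1 + ε')) := add_le_add htailsum hPE2
      _ ≤ c * (n:ℝ) ^ (-(1 + ε')) := by
          have hnn : (0:ℝ) ≤ (n0:ℝ) ^ (1 + ε') := Real.rpow_nonneg (Nat.cast_nonneg _) _
          have hKC : K + C2 ≤ c := by rw [hcdef]; linarith
          calc K * (n:ℝ) ^ (-(1 + ε')) + C2 * (n:ℝ) ^ (-(1 + ε'))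
              = (K + C2) * (n:ℝ) ^ (-(1 + ε')) := by ring
            _ ≤ c * (n:ℝ) ^ (-(1 + ε')) := mul_le_mul_of_nonneg_right hKC hnegpow.le
end

section
/- For every ϑ ∈ ℝ and every a, b > 0 there exists a constant c > 0, depending only on a and b, with the following property: for every measure m on V such that L_m(ϑ−a) < ∞, L_m(ϑ+b) < ∞ and 0 < L_m(ϑ) < ∞, one has |κ_m′(ϑ)|⁸ ≤ c · (e^{κ_m(ϑ−a)−κ_m(ϑ)} + e^{κ_m(ϑ+b)−κ_m(ϑ)}) and (∫ Σ_{i=1}^{N} ζ_i⁸ e^{−ϑζ_i} dm) / L_m(ϑ) ≤ c · (e^{κ_m(ϑ−a)−κ_m(ϑ)} + e^{κ_m(ϑ+b)−κ_m(ϑ)}). -/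
open MeasureTheory

noncomputable section

/-- The space `V = ℕ × ℝ^ℕ`; an element is `(N, ζ)`. -/
abbrev V : Type := ℕ × (ℕ → ℝ)

/-- `L m θ = ∫ ∑_{i<N} e^{-θ ζ_i} dm ∈ [0,∞]`. -/
def L (m : Measure V) (θ : ℝ) : ENNReal :=
  ∫⁻ p, ENNReal.ofReal (∑ i ∈ Finset.range p.1, Real.exp (-θ * p.2 i)) ∂m

/-- `κ_m(θ) = log L_m(θ)`. -/
def kap (m : Measure V) (θ : ℝ) : ℝ := Real.log (L m θ).toReal

namespace Stmt10Aux

/-- elementary: `t^8 ≤ 8^8 e^t` for `t ≥ 0`. -/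
lemma pow8_le_exp {t : ℝ} (ht : 0 ≤ t) : t ^ 8 ≤ 8 ^ 8 * Real.exp t := by
  have h8 : t / 8 ≤ Real.exp (t / 8) := by
    have := Real.add_one_le_exp (t / 8); linarith
  have h0 : (0 : ℝ) ≤ t / 8 := by linarith
  have hp := pow_le_pow_left₀ h0 h8 8
  have he : Real.exp (t / 8) ^ 8 = Real.exp t := by
    rw [← Real.exp_nat_mul]; congr 1; push_cast; ring
  rw [he] at hp
  calc t ^ 8 = 8 ^ 8 * (t / 8) ^ 8 := by ring
    _ ≤ 8 ^ 8 * Real.exp t := by nlinarith [hp]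

lemma pow8_le_exp' {a x : ℝ} (ha : 0 < a) (hx : 0 ≤ a * x) :
    x ^ 8 ≤ 8 ^ 8 / a ^ 8 * Real.exp (a * x) := by
  have h1 : (a * x) ^ 8 ≤ 8 ^ 8 * Real.exp (a * x) := pow8_le_exp hx
  have h4 : x ^ 8 = (a * x) ^ 8 / a ^ 8 := by field_simp
  have h5 : (a * x) ^ 8 / a ^ 8 ≤ 8 ^ 8 * Real.exp (a * x) / a ^ 8 := by gcongr
  rw [h4]
  calc (a * x) ^ 8 / a ^ 8 ≤ 8 ^ 8 * Real.exp (a * x) / a ^ 8 := h5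
    _ = 8 ^ 8 / a ^ 8 * Real.exp (a * x) := by ring

/-- elementary: `x^8 ≤ Ca e^{ax} + Cb e^{-bx}`. -/
lemma pow8_le {a b : ℝ} (ha : 0 < a) (hb : 0 < b) (x : ℝ) :
    x ^ 8 ≤ 8 ^ 8 / a ^ 8 * Real.exp (a * x) + 8 ^ 8 / b ^ 8 * Real.exp (-b * x) := by
  rcases le_or_gt 0 x with hx | hx
  · have h1 := pow8_le_exp' (x := x) ha (by positivity)
    have h3 : (0:ℝ) ≤ 8 ^ 8 / b ^ 8 * Real.exp (-b * x) := by positivity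
    linarith
  · have h1 : x ^ 8 ≤ 8 ^ 8 / b ^ 8 * Real.exp (-b * x) := by
      have := pow8_le_exp' (a := b) (x := -x) hb (by nlinarith)
      have hxx : (-x) ^ 8 = x ^ 8 := by ring
      have hbx : b * -x = -b * x := by ring
      rw [hxx, hbx] at this; exact this
    have h3 : (0:ℝ) ≤ 8 ^ 8 / a ^ 8 * Real.exp (a * x) := by positivity
    linarith

/-- elementary: bound for the derivative integrand. -/
lemma abs_mul_exp_le {a b t x : ℝ} (ha : 0 < a) (hb : 0 < b)
    (ht1 : -(b / 2) ≤ t) (ht2 : t ≤ a / 2) :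
    |x * Real.exp (t * x)| ≤ 2 / a * Real.exp (a * x) + 2 / b * Real.exp (-b * x) := by
  rw [abs_mul, abs_of_pos (Real.exp_pos _)]
  rcases le_or_gt 0 x with hx | hx
  · have he : Real.exp (t * x) ≤ Real.exp (a / 2 * x) :=
      Real.exp_le_exp.mpr (by nlinarith)
    have hxe : |x| ≤ 2 / a * Real.exp (a / 2 * x) := by
      rw [abs_of_nonneg hx, show (2:ℝ) / a * Real.exp (a / 2 * x)
        = 2 * Real.exp (a / 2 * x) / a by ring, le_div_iff₀ ha]
      have := Real.add_one_le_exp (a / 2 * x)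
      nlinarith
    have h3 : (0:ℝ) ≤ 2 / b * Real.exp (-b * x) := by positivity
    have key : |x| * Real.exp (t * x) ≤ 2 / a * Real.exp (a * x) := by
      have heq : 2 / a * Real.exp (a / 2 * x) * Real.exp (a / 2 * x)
          = 2 / a * Real.exp (a * x) := by
        rw [mul_assoc, ← Real.exp_add]; ring_nf
      calc |x| * Real.exp (t * x) ≤ 2 / a * Real.exp (a / 2 * x) * Real.exp (a / 2 * x) := by
            apply mul_le_mul hxe he (Real.exp_pos _).le (by positivity)
        _ = 2 / a * Real.exp (a * x) := heq
    linarith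
  · have he : Real.exp (t * x) ≤ Real.exp (b / 2 * (-x)) :=
      Real.exp_le_exp.mpr (by nlinarith)
    have hxe : |x| ≤ 2 / b * Real.exp (b / 2 * (-x)) := by
      rw [abs_of_neg hx, show (2:ℝ) / b * Real.exp (b / 2 * (-x))
        = 2 * Real.exp (b / 2 * (-x)) / b by ring, le_div_iff₀ hb]
      have := Real.add_one_le_exp (b / 2 * (-x))
      nlinarith
    have h3 : (0:ℝ) ≤ 2 / a * Real.exp (a * x) := by positivity
    have key : |x| * Real.exp (t * x) ≤ 2 / b * Real.exp (-b * x) := by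
      have heq : 2 / b * Real.exp (b / 2 * (-x)) * Real.exp (b / 2 * (-x))
          = 2 / b * Real.exp (-b * x) := by
        rw [mul_assoc, ← Real.exp_add]; ring_nf
      calc |x| * Real.exp (t * x) ≤ 2 / b * Real.exp (b / 2 * (-x)) * Real.exp (b / 2 * (-x)) := by
            apply mul_le_mul hxe he (Real.exp_pos _).le (by positivity)
        _ = 2 / b * Real.exp (-b * x) := heq
    linarith

/-- The tilted occupation measure on `ℝ`. -/
def tilt (m : Measure V) (ϑ : ℝ) : Measure ℝ :=
  Measure.sum fun i : ℕ =>
    Measure.map (fun p : V => p.2 i)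
      ((m.restrict {p : V | i < p.1}).withDensity
        fun p => ENNReal.ofReal (Real.exp (-ϑ * p.2 i)))

lemma lintegral_tilt (m : Measure V) (ϑ : ℝ) {g : ℝ → ENNReal} (hg : Measurable g) :
    ∫⁻ x, g x ∂(tilt m ϑ)
      = ∫⁻ p : V, ∑ i ∈ Finset.range p.1,
          ENNReal.ofReal (Real.exp (-ϑ * p.2 i)) * g (p.2 i) ∂m := by
  have hev : ∀ i : ℕ, Measurable fun p : V => p.2 i :=
    fun i => (measurable_pi_apply i).comp measurable_snd
  have hd : ∀ i : ℕ, Measurable fun p : V => ENNReal.ofReal (Real.exp (-ϑ * p.2 i)) :=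
    fun i => (Real.measurable_exp.comp ((hev i).const_mul (-ϑ))).ennreal_ofReal
  have hS : ∀ i : ℕ, MeasurableSet {p : V | i < p.1} := by
    intro i
    exact measurable_fst (show MeasurableSet {n : ℕ | i < n} from trivial)
  have h1 : ∀ i : ℕ,
      (∫⁻ x, g x ∂(Measure.map (fun p : V => p.2 i)
        ((m.restrict {p : V | i < p.1}).withDensity
          fun p => ENNReal.ofReal (Real.exp (-ϑ * p.2 i)))))
      = ∫⁻ p, ({p : V | i < p.1}.indicator
          (fun p => ENNReal.ofReal (Real.exp (-ϑ * p.2 i)) * g (p.2 i))) p ∂m := by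
    intro i
    rw [lintegral_map hg (hev i),
      lintegral_withDensity_eq_lintegral_mul _ (hd i)
        (show Measurable fun p : V => g (p.2 i) from hg.comp (hev i)),
      ← lintegral_indicator (hS i)]
    rfl
  rw [tilt, lintegral_sum_measure, tsum_congr h1,
    ← lintegral_tsum fun i => ((show Measurable fun p : V =>
      ENNReal.ofReal (Real.exp (-ϑ * p.2 i)) * g (p.2 i) from (hd i).mul
      (show Measurable fun p : V => g (p.2 i) from hg.comp (hev i))).indicator (hS i)).aemeasurable]
  refine lintegral_congr fun p => ?_
  rw [tsum_eq_sum (s := Finset.range p.1)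
    (fun i hi => Set.indicator_of_notMem (by simpa using Finset.mem_range.not.mp hi) _)]
  exact Finset.sum_congr rfl fun i hi =>
    Set.indicator_of_mem (show p ∈ {q : V | i < q.1} from Finset.mem_range.mp hi) _

end Stmt10Aux

open Stmt10Aux

/-- for all `a, b > 0` there is a constant `c > 0` depending only on `a, b`
such that for every `ϑ` and every measure `m` with `L_m(ϑ-a), L_m(ϑ+b) < ∞` and
`0 < L_m(ϑ) < ∞`, both `|κ_m'(ϑ)|⁸` and the tilted eighth moment are bounded by
`c (e^{κ(ϑ-a)-κ(ϑ)} + e^{κ(ϑ+b)-κ(ϑ)})`. -/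
theorem stmt_10 (a b : ℝ) (ha : 0 < a) (hb : 0 < b) :
    ∃ c > (0:ℝ), ∀ (ϑ : ℝ) (m : Measure V),
      L m (ϑ - a) < ⊤ → L m (ϑ + b) < ⊤ → 0 < L m ϑ → L m ϑ < ⊤ →
      |deriv (kap m) ϑ| ^ 8
        ≤ c * (Real.exp (kap m (ϑ - a) - kap m ϑ) + Real.exp (kap m (ϑ + b) - kap m ϑ)) ∧
      (∫⁻ p, ENNReal.ofReal (∑ i ∈ Finset.range p.1,
            (p.2 i) ^ 8 * Real.exp (-ϑ * p.2 i)) ∂m) / L m ϑ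
        ≤ ENNReal.ofReal (c * (Real.exp (kap m (ϑ - a) - kap m ϑ)
            + Real.exp (kap m (ϑ + b) - kap m ϑ))) := by
  have hCa : (0:ℝ) < 8 ^ 8 / a ^ 8 := by positivity
  have hCb : (0:ℝ) < 8 ^ 8 / b ^ 8 := by positivity
  refine ⟨8 ^ 8 / a ^ 8 + 8 ^ 8 / b ^ 8, by positivity, ?_⟩
  intro ϑ m h1 h2 h3 h4
  set Ca : ℝ := 8 ^ 8 / a ^ 8 with hCadef
  set Cb : ℝ := 8 ^ 8 / b ^ 8 with hCbdef
  set μ : Measure ℝ := tilt m ϑ with hμdef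
  have hgmeas : ∀ t : ℝ, Measurable fun x : ℝ => ENNReal.ofReal (Real.exp (t * x)) :=
    fun t => (Real.measurable_exp.comp (measurable_id.const_mul t)).ennreal_ofReal
  -- `L` through `μ`
  have hL : ∀ θ : ℝ, L m θ = ∫⁻ x, ENNReal.ofReal (Real.exp ((ϑ - θ) * x)) ∂μ := by
    intro θ
    rw [hμdef, lintegral_tilt m ϑ (hgmeas (ϑ - θ))]
    unfold L
    refine lintegral_congr fun p => ?_
    rw [ENNReal.ofReal_sum_of_nonneg (fun i _ => (Real.exp_pos _).le)]
    refine Finset.sum_congr rfl fun i _ => ?_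
    rw [← ENNReal.ofReal_mul (Real.exp_pos _).le, ← Real.exp_add]
    congr 1; ring
  have hM8 : (∫⁻ p, ENNReal.ofReal (∑ i ∈ Finset.range p.1,
        (p.2 i) ^ 8 * Real.exp (-ϑ * p.2 i)) ∂m)
      = ∫⁻ x, ENNReal.ofReal (x ^ 8) ∂μ := by
    rw [hμdef, lintegral_tilt m ϑ (show Measurable fun x : ℝ => ENNReal.ofReal (x ^ 8) from
      (measurable_id.pow_const 8).ennreal_ofReal)]
    refine lintegral_congr fun p => ?_
    rw [ENNReal.ofReal_sum_of_nonneg (fun i _ => by positivity)]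
    refine Finset.sum_congr rfl fun i _ => ?_
    rw [← ENNReal.ofReal_mul (Real.exp_pos _).le]
    congr 1; ring
  have hT : μ Set.univ = L m ϑ := by
    rw [hL ϑ]; simp
  haveI : IsFiniteMeasure μ := ⟨by rw [hT]; exact h4⟩
  haveI : NeZero μ := ⟨by
    intro h0
    rw [h0] at hT
    simp only [Measure.coe_zero, Pi.zero_apply] at hT
    exact absurd hT.symm (ne_of_gt h3)⟩
  have hLa : L m (ϑ - a) = ∫⁻ x, ENNReal.ofReal (Real.exp (a * x)) ∂μ := by
    have := hL (ϑ - a); rwa [sub_sub_cancel] at this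
  have hLb : L m (ϑ + b) = ∫⁻ x, ENNReal.ofReal (Real.exp (-b * x)) ∂μ := by
    have := hL (ϑ + b); rwa [show ϑ - (ϑ + b) = -b by ring] at this
  -- positivity of the shifted `L`s
  have hsupp : ∀ t : ℝ, (0:ENNReal) < ∫⁻ x, ENNReal.ofReal (Real.exp (t * x)) ∂μ := by
    intro t
    rw [lintegral_pos_iff_support (hgmeas t)]
    have hsu : Function.support (fun x : ℝ => ENNReal.ofReal (Real.exp (t * x))) = Set.univ := by
      ext x
      simp [Function.mem_support, ENNReal.ofReal_eq_zero, not_le, Real.exp_pos]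
    rw [hsu, hT]
    exact h3
  have hLapos : 0 < L m (ϑ - a) := by rw [hLa]; exact hsupp a
  have hLbpos : 0 < L m (ϑ + b) := by rw [hLb]; exact hsupp (-b)
  -- integrability
  have int_of : ∀ t : ℝ, (∫⁻ x, ENNReal.ofReal (Real.exp (t * x)) ∂μ) < ⊤ →
      Integrable (fun x => Real.exp (t * x)) μ := by
    intro t h
    refine ⟨(Real.continuous_exp.comp (continuous_const.mul continuous_id)).aestronglyMeasurable, ?_⟩
    rw [hasFiniteIntegral_iff_ofReal (Filter.Eventually.of_forall fun x => (Real.exp_pos _).le)]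
    exact h
  have intA : Integrable (fun x => Real.exp (a * x)) μ := int_of a (hLa ▸ h1)
  have intB : Integrable (fun x => Real.exp (-b * x)) μ := int_of (-b) (hLb ▸ h2)
  -- differentiation under the integral sign
  have εpos : (0:ℝ) < min a b / 2 := by positivity
  have hder := hasDerivAt_integral_of_dominated_loc_of_deriv_le (μ := μ) (𝕜 := ℝ)
    (F := fun t x => Real.exp (t * x)) (F' := fun t x => x * Real.exp (t * x))
    (x₀ := (0:ℝ)) (s := Metric.ball (0:ℝ) (min a b / 2))
    (bound := fun x => 2 / a * Real.exp (a * x) + 2 / b * Real.exp (-b * x))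
    (Metric.ball_mem_nhds _ εpos)
    (Filter.Eventually.of_forall fun t =>
      (Real.continuous_exp.comp (continuous_const.mul continuous_id)).aestronglyMeasurable)
    (by
      simp only [zero_mul, Real.exp_zero]
      exact integrable_const 1)
    ((continuous_id.mul
      (Real.continuous_exp.comp (continuous_const.mul continuous_id))).aestronglyMeasurable)
    (Filter.Eventually.of_forall fun x t ht => by
      have ht' : |t| < min a b / 2 := by
        simpa [Real.dist_eq] using Metric.mem_ball.mp ht
      have h1t : t ≤ a / 2 := le_of_lt (lt_of_lt_of_le (abs_lt.mp ht').2
        (by have := min_le_left a b; linarith))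
      have h2t : -(b / 2) ≤ t := le_of_lt (lt_of_le_of_lt
        (by have := min_le_right a b; linarith) (abs_lt.mp ht').1)
      simpa [Real.norm_eq_abs, neg_mul, abs_mul, abs_of_pos (Real.exp_pos (t * x))] using
        abs_mul_exp_le (x := x) ha hb h2t h1t)
    ((intA.const_mul _).add (intB.const_mul _))
    (Filter.Eventually.of_forall fun x t ht => by
      simpa [mul_comm] using (((hasDerivAt_id t).mul_const x).exp))
  obtain ⟨intId', hH⟩ := hder
  have intId : Integrable (fun x : ℝ => x) μ := by simpa using intId'
  have hH0 : HasDerivAt (fun t : ℝ => ∫ x, Real.exp (t * x) ∂μ) (∫ x, x ∂μ) 0 := by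
    simpa using hH
  set M : ℝ := ∫ x, x ∂μ with hMdef
  set Tr : ℝ := (L m ϑ).toReal with hTrdef
  have hTrpos : 0 < Tr := ENNReal.toReal_pos h3.ne' h4.ne
  -- values of the Bochner integrals
  have hval : ∀ t : ℝ, ∫ x, Real.exp (t * x) ∂μ
      = (∫⁻ x, ENNReal.ofReal (Real.exp (t * x)) ∂μ).toReal := fun t =>
    integral_eq_lintegral_of_nonneg_ae (Filter.Eventually.of_forall fun x => (Real.exp_pos _).le)
      (Real.continuous_exp.comp (continuous_const.mul continuous_id)).aestronglyMeasurable
  have hH0val : (∫ x, Real.exp ((0:ℝ) * x) ∂μ) = Tr := by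
    simp only [zero_mul, Real.exp_zero, integral_const, smul_eq_mul, mul_one]
    rw [measureReal_def, hT, hTrdef]
  -- kap through μ
  have hkap : kap m = fun θ => Real.log (∫ x, Real.exp ((ϑ - θ) * x) ∂μ) := by
    funext θ
    unfold kap
    rw [hL θ, hval (ϑ - θ)]
  -- the derivative of kap
  have hinner : HasDerivAt (fun θ : ℝ => ϑ - θ) (-1) ϑ := by
    simpa using (hasDerivAt_id ϑ).const_sub ϑ
  have hH0' : HasDerivAt (fun t : ℝ => ∫ x, Real.exp (t * x) ∂μ) M (ϑ - ϑ) := by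
    rw [sub_self]; exact hH0
  have hcomp : HasDerivAt (fun θ : ℝ => ∫ x, Real.exp ((ϑ - θ) * x) ∂μ) (M * -1) ϑ :=
    HasDerivAt.comp ϑ hH0' hinner
  have hne : (∫ x, Real.exp ((ϑ - ϑ) * x) ∂μ) ≠ 0 := by
    rw [sub_self, hH0val]; exact hTrpos.ne'
  have hlog := hcomp.log hne
  have hderiv : deriv (kap m) ϑ = -(M / Tr) := by
    rw [hkap, hlog.deriv, sub_self, hH0val]
    ring
  -- exponential identities
  have hE1 : Real.exp (kap m (ϑ - a) - kap m ϑ) = (L m (ϑ - a)).toReal / Tr := by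
    unfold kap
    rw [Real.exp_sub, Real.exp_log (ENNReal.toReal_pos hLapos.ne' h1.ne),
      Real.exp_log (ENNReal.toReal_pos h3.ne' h4.ne)]
  have hE2 : Real.exp (kap m (ϑ + b) - kap m ϑ) = (L m (ϑ + b)).toReal / Tr := by
    unfold kap
    rw [Real.exp_sub, Real.exp_log (ENNReal.toReal_pos hLbpos.ne' h2.ne),
      Real.exp_log (ENNReal.toReal_pos h3.ne' h4.ne)]
  -- Jensen's inequality
  have javg : ∀ t : ℝ, Integrable (fun x => Real.exp (t * x)) μ →
      Real.exp (t * (M / Tr)) ≤ (∫ x, Real.exp (t * x) ∂μ) / Tr := by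
    intro t hint
    have hj := convexOn_exp.map_average_le Real.continuous_exp.continuousOn isClosed_univ
      (Filter.Eventually.of_forall fun x => Set.mem_univ _) (intId.const_mul t)
      (by exact hint)
    rw [average_eq, average_eq, integral_const_mul] at hj
    have hμT : (μ Set.univ).toReal = Tr := by rw [hT, hTrdef]
    rw [measureReal_def, hμT] at hj
    have harg : Tr⁻¹ • (t * M) = t * (M / Tr) := by
      rw [smul_eq_mul]; field_simp
    rw [harg] at hj
    rw [smul_eq_mul] at hj
    calc Real.exp (t * (M / Tr)) ≤ Tr⁻¹ * ∫ x, Real.exp (t * x) ∂μ := hj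
      _ = (∫ x, Real.exp (t * x) ∂μ) / Tr := by ring
  have jA : Real.exp (a * (M / Tr)) ≤ Real.exp (kap m (ϑ - a) - kap m ϑ) := by
    rw [hE1]
    have := javg a intA
    rwa [hval a, ← hLa] at this
  have jB : Real.exp (-b * (M / Tr)) ≤ Real.exp (kap m (ϑ + b) - kap m ϑ) := by
    rw [hE2]
    have := javg (-b) intB
    rwa [hval (-b), ← hLb] at this
  have hE1pos : 0 < Real.exp (kap m (ϑ - a) - kap m ϑ) := Real.exp_pos _
  have hE2pos : 0 < Real.exp (kap m (ϑ + b) - kap m ϑ) := Real.exp_pos _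
  constructor
  · -- first inequality
    rw [hderiv, abs_neg]
    set s : ℝ := M / Tr with hsdef
    have habs : |s| ^ 8 = s ^ 8 := by
      rw [← abs_pow]; exact abs_of_nonneg (by positivity)
    rw [habs]
    rcases le_or_gt 0 s with hs | hs
    · have hp := pow8_le_exp' (x := s) ha (by positivity)
      have : s ^ 8 ≤ Ca * Real.exp (kap m (ϑ - a) - kap m ϑ) := by
        calc s ^ 8 ≤ 8 ^ 8 / a ^ 8 * Real.exp (a * s) := hp
          _ ≤ Ca * Real.exp (kap m (ϑ - a) - kap m ϑ) := by
              rw [hCadef]; exact mul_le_mul_of_nonneg_left jA (le_of_lt hCa)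
      nlinarith [hE1pos, hE2pos, hCa, hCb]
    · have hbs : 0 ≤ b * (-s) := by nlinarith
      have hp := pow8_le_exp' (a := b) (x := -s) hb hbs
      have hss : (-s) ^ 8 = s ^ 8 := by ring
      have hexp : b * (-s) = -b * s := by ring
      rw [hss, hexp] at hp
      have : s ^ 8 ≤ Cb * Real.exp (kap m (ϑ + b) - kap m ϑ) := by
        calc s ^ 8 ≤ 8 ^ 8 / b ^ 8 * Real.exp (-b * s) := hp
          _ ≤ Cb * Real.exp (kap m (ϑ + b) - kap m ϑ) := by
              rw [hCbdef]; exact mul_le_mul_of_nonneg_left jB (le_of_lt hCb)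
      nlinarith [hE1pos, hE2pos, hCa, hCb]
  · -- second inequality
    rw [hM8]
    have hpt : ∀ x : ℝ, ENNReal.ofReal (x ^ 8)
        ≤ ENNReal.ofReal Ca * ENNReal.ofReal (Real.exp (a * x))
          + ENNReal.ofReal Cb * ENNReal.ofReal (Real.exp (-b * x)) := by
      intro x
      rw [← ENNReal.ofReal_mul hCa.le, ← ENNReal.ofReal_mul hCb.le,
        ← ENNReal.ofReal_add (by positivity) (by positivity)]
      exact ENNReal.ofReal_le_ofReal (pow8_le ha hb x)
    have hMle : (∫⁻ x, ENNReal.ofReal (x ^ 8) ∂μ)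
        ≤ ENNReal.ofReal (Ca + Cb) * (L m (ϑ - a) + L m (ϑ + b)) := by
      calc (∫⁻ x, ENNReal.ofReal (x ^ 8) ∂μ)
          ≤ ∫⁻ x, ENNReal.ofReal Ca * ENNReal.ofReal (Real.exp (a * x))
            + ENNReal.ofReal Cb * ENNReal.ofReal (Real.exp (-b * x)) ∂μ :=
            lintegral_mono hpt
        _ = ENNReal.ofReal Ca * (∫⁻ x, ENNReal.ofReal (Real.exp (a * x)) ∂μ)
            + ENNReal.ofReal Cb * (∫⁻ x, ENNReal.ofReal (Real.exp (-b * x)) ∂μ) := by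
            rw [lintegral_add_left ((hgmeas a).const_mul _),
              lintegral_const_mul _ (hgmeas a), lintegral_const_mul _ (hgmeas (-b))]
        _ = ENNReal.ofReal Ca * L m (ϑ - a) + ENNReal.ofReal Cb * L m (ϑ + b) := by
            rw [← hLa, ← hLb]
        _ ≤ ENNReal.ofReal (Ca + Cb) * (L m (ϑ - a) + L m (ϑ + b)) := by
            rw [mul_add]
            refine add_le_add ?_ ?_
            · exact mul_le_mul_left (ENNReal.ofReal_le_ofReal (by linarith [hCb])) _
            · exact mul_le_mul_left (ENNReal.ofReal_le_ofReal (by linarith [hCa])) _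
    have hRHS : ENNReal.ofReal ((Ca + Cb) * (Real.exp (kap m (ϑ - a) - kap m ϑ)
          + Real.exp (kap m (ϑ + b) - kap m ϑ)))
        = ENNReal.ofReal (Ca + Cb) * (L m (ϑ - a) + L m (ϑ + b)) / L m ϑ := by
      rw [ENNReal.ofReal_mul (by positivity), ENNReal.ofReal_add hE1pos.le hE2pos.le,
        hE1, hE2, ENNReal.ofReal_div_of_pos hTrpos, ENNReal.ofReal_div_of_pos hTrpos,
        ENNReal.ofReal_toReal h1.ne, ENNReal.ofReal_toReal h2.ne, hTrdef,
        ENNReal.ofReal_toReal h4.ne, ENNReal.div_add_div_same, mul_div_assoc]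
    rw [hRHS]
    exact ENNReal.div_le_div_right hMle _



end
end

section
/- Let m be a probability measure on V, let ϑ, λ, β > 0 and A > 0, and set v₁ := λ/(ϑ+λ). Then ∫ 1_{{N > A}} Σ_{i=1}^{N} e^{−ϑζ_i} dm(N,ζ) ≤ A^{−βv₁} · (∫ N^{1+β} dm)^{v₁} · (∫ Σ_{i=1}^{N} e^{−(ϑ+λ)ζ_i} dm)^{1−v₁}, where the right-hand side is interpreted as +∞ if either integral there is infinite. -/
open MeasureTheory ENNReal

lemma aux1 (c : ℝ) (n : ℕ) :
    Measurable (fun ζ : ℕ → ℝ =>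
      ENNReal.ofReal (∑ i ∈ Finset.range n, Real.exp (c * ζ i))) :=
  (Finset.measurable_sum (Finset.range n) fun i _ =>
      (Real.measurable_exp.comp (by fun_prop : Measurable fun ζ : ℕ → ℝ => c * ζ i))).ennreal_ofReal

lemma aux_meas (c : ℝ) :
    Measurable (fun p : ℕ × (ℕ → ℝ) =>
      ENNReal.ofReal (∑ i ∈ Finset.range p.1, Real.exp (c * p.2 i))) := by
  intro s hs
  have h : (fun p : ℕ × (ℕ → ℝ) =>
      ENNReal.ofReal (∑ i ∈ Finset.range p.1, Real.exp (c * p.2 i))) ⁻¹' s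
      = ⋃ n : ℕ, ({n} : Set ℕ) ×ˢ
        ((fun ζ : ℕ → ℝ => ENNReal.ofReal (∑ i ∈ Finset.range n, Real.exp (c * ζ i))) ⁻¹' s) := by
    ext ⟨N, ζ⟩
    simp [Set.mem_iUnion]
  rw [h]
  exact MeasurableSet.iUnion fun n => (measurableSet_singleton n).prod (aux1 c n hs)

/-- for a probability measure `m` on `V = ℕ × ℝ^ℕ`, `ϑ, λ, β, A > 0` and
`v₁ = λ/(ϑ+λ)`,
`∫ 1_{N>A} ∑_{i<N} e^{-ϑζ_i} dm ≤ A^{-βv₁} (∫ N^{1+β} dm)^{v₁} (∫ ∑_{i<N} e^{-(ϑ+λ)ζ_i} dm)^{1-v₁}`. -/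
theorem stmt_12 (m : Measure (ℕ × (ℕ → ℝ))) [IsProbabilityMeasure m]
    (ϑ lam β A : ℝ) (hϑ : 0 < ϑ) (hlam : 0 < lam) (hβ : 0 < β) (hA : 0 < A) :
    (∫⁻ p, ENNReal.ofReal
        (if A < (p.1 : ℝ) then ∑ i ∈ Finset.range p.1, Real.exp (-ϑ * p.2 i) else 0) ∂m)
      ≤ ENNReal.ofReal (A ^ (-(β * (lam / (ϑ + lam)))))
        * (∫⁻ p, (p.1 : ENNReal) ^ ((1:ℝ) + β) ∂m) ^ (lam / (ϑ + lam))
        * (∫⁻ p, ENNReal.ofReal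
            (∑ i ∈ Finset.range p.1, Real.exp (-(ϑ + lam) * p.2 i)) ∂m)
          ^ (1 - lam / (ϑ + lam)) := by
  set v : ℝ := lam / (ϑ + lam) with hv_def
  have hϑl : 0 < ϑ + lam := by linarith
  have hv : 0 < v := div_pos hlam hϑl
  have hv1 : v < 1 := (div_lt_one hϑl).2 (by linarith)
  have hv1' : 0 < 1 - v := by linarith
  set f : ℕ × (ℕ → ℝ) → ℝ≥0∞ := fun p => (p.1 : ℝ≥0∞) ^ ((1 + β) * v) with hf_def
  set g : ℕ × (ℕ → ℝ) → ℝ≥0∞ := fun p =>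
    (ENNReal.ofReal (∑ i ∈ Finset.range p.1, Real.exp (-(ϑ + lam) * p.2 i))) ^ (1 - v)
    with hg_def
  have hpq : (1 / v).HolderConjugate (1 / (1 - v)) :=
    Real.holderConjugate_one_div hv hv1' (by ring)
  -- pointwise bound
  have hpoint : ∀ p : ℕ × (ℕ → ℝ),
      ENNReal.ofReal
        (if A < (p.1 : ℝ) then ∑ i ∈ Finset.range p.1, Real.exp (-ϑ * p.2 i) else 0)
      ≤ ENNReal.ofReal (A ^ (-(β * v))) * (f p * g p) := by
    intro ⟨N, ζ⟩
    by_cases hN : A < (N : ℝ)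
    · simp only [if_pos hN]
      have hsum : ENNReal.ofReal (∑ i ∈ Finset.range N, Real.exp (-ϑ * ζ i))
          = ∑ i ∈ Finset.range N,
              (1 : ℝ≥0∞) * (ENNReal.ofReal (Real.exp (-(ϑ + lam) * ζ i))) ^ (1 - v) := by
        rw [ENNReal.ofReal_sum_of_nonneg (fun i _ => (Real.exp_pos _).le)]
        refine Finset.sum_congr rfl fun i _ => ?_
        rw [one_mul, ENNReal.ofReal_rpow_of_pos (Real.exp_pos _), ← Real.exp_mul]
        congr 1
        rw [hv_def]
        field_simp
        ring
      have hHolder := ENNReal.inner_le_Lp_mul_Lq (Finset.range N)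
        (fun _ => (1 : ℝ≥0∞))
        (fun i => (ENNReal.ofReal (Real.exp (-(ϑ + lam) * ζ i))) ^ (1 - v)) hpq
      rw [hsum]
      refine le_trans hHolder ?_
      have h1 : (∑ _i ∈ Finset.range N, (1 : ℝ≥0∞) ^ (1 / v)) ^ (1 / (1 / v))
          = (N : ℝ≥0∞) ^ v := by
        simp [one_div_one_div]
      have h2 : (∑ i ∈ Finset.range N,
            ((ENNReal.ofReal (Real.exp (-(ϑ + lam) * ζ i))) ^ (1 - v)) ^ (1 / (1 - v)))
            ^ (1 / (1 / (1 - v))) = g (N, ζ) := by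
        rw [one_div_one_div]
        congr 1
        rw [ENNReal.ofReal_sum_of_nonneg (fun i _ => (Real.exp_pos _).le)]
        refine Finset.sum_congr rfl fun i _ => ?_
        rw [← ENNReal.rpow_mul, mul_one_div, div_self (ne_of_gt hv1'), ENNReal.rpow_one]
      rw [h1, h2]
      have hrealbound : (1 : ℝ) ≤ A ^ (-(β * v)) * (N : ℝ) ^ (β * v) := by
        rw [Real.rpow_neg hA.le]
        rw [inv_mul_eq_div, le_div_iff₀ (Real.rpow_pos_of_pos hA _), one_mul]
        exact Real.rpow_le_rpow hA.le hN.le (by positivity)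
      have hNpos : (0 : ℝ) < N := lt_trans hA hN
      have hfpull : ENNReal.ofReal (A ^ (-(β * v))) * f (N, ζ)
          = (ENNReal.ofReal (A ^ (-(β * v))) * (N : ℝ≥0∞) ^ (β * v)) * (N : ℝ≥0∞) ^ v := by
        rw [mul_assoc, hf_def]
        congr 1
        rw [← ENNReal.rpow_add _ _ (by exact_mod_cast hNpos.ne') (by simp)]
        congr 1
        ring
      have hone : (1 : ℝ≥0∞) ≤ ENNReal.ofReal (A ^ (-(β * v))) * (N : ℝ≥0∞) ^ (β * v) := by
        have : (N : ℝ≥0∞) ^ (β * v) = ENNReal.ofReal ((N : ℝ) ^ (β * v)) := by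
          rw [← ENNReal.ofReal_rpow_of_pos hNpos, ENNReal.ofReal_natCast]
        rw [this, ← ENNReal.ofReal_mul (by positivity), ← ENNReal.ofReal_one]
        exact ENNReal.ofReal_le_ofReal hrealbound
      calc (N : ℝ≥0∞) ^ v * g (N, ζ)
          ≤ (ENNReal.ofReal (A ^ (-(β * v))) * (N : ℝ≥0∞) ^ (β * v)) * (N : ℝ≥0∞) ^ v
            * g (N, ζ) := by
            refine mul_le_mul_left ?_ _
            calc (N : ℝ≥0∞) ^ v = 1 * (N : ℝ≥0∞) ^ v := (one_mul _).symm
              _ ≤ _ := mul_le_mul_left hone _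
        _ = ENNReal.ofReal (A ^ (-(β * v))) * (f (N, ζ) * g (N, ζ)) := by
            rw [← mul_assoc, ← hfpull, mul_assoc]
    · simp [if_neg hN]
  -- integrate the pointwise bound
  refine le_trans (lintegral_mono hpoint) ?_
  rw [lintegral_const_mul' _ _ ENNReal.ofReal_ne_top]
  rw [mul_assoc]
  refine mul_le_mul_right ?_ _
  -- Hölder for integrals
  have hf_meas : AEMeasurable f m :=
    (((measurable_of_countable (fun n : ℕ => (n : ℝ≥0∞))).comp
      measurable_fst).pow_const _).aemeasurable
  have hg_meas : AEMeasurable g m := ((aux_meas (-(ϑ + lam))).pow_const _).aemeasurable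
  have hH := ENNReal.lintegral_mul_le_Lp_mul_Lq m hpq hf_meas hg_meas
  refine le_trans (le_of_eq ?_) (le_trans hH (le_of_eq ?_))
  · rfl
  · rw [one_div_one_div, one_div_one_div]
    congr 1
    · congr 1
      refine lintegral_congr fun p => ?_
      rw [hf_def, ← ENNReal.rpow_mul]
      congr 1
      field_simp
    · congr 1
      refine lintegral_congr fun p => ?_
      rw [hg_def, ← ENNReal.rpow_mul, mul_one_div, div_self (ne_of_gt hv1'), ENNReal.rpow_one]
end

section
/- Let m be a probability measure on V and ϑ > 0 such that L_m(θ) ∈ (0, ∞) for all θ in an open interval containing ϑ, and suppose κ_m(ϑ) = ϑ · κ_m′(ϑ). Then ∫ Σ_{i=1}^{N} 1_{{ϑζ_i + κ_m(ϑ) ≤ 0}} dm(N,ζ) > 0; in particular m({(N, ζ) ∈ V : ∃ 1 ≤ i ≤ N with ϑζ_i + κ_m(ϑ) ≤ 0}) > 0. -/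
open MeasureTheory

open Real Filter Topology

noncomputable section

def fB (a ϑ : ℝ) (p : V) : ℝ := ∑ i ∈ Finset.range p.1, Real.exp (-(ϑ * (p.2 i + a)))
def wB (a ϑ t : ℝ) (p : V) : ℝ :=
  ∑ i ∈ Finset.range p.1, Real.exp (-(ϑ * (p.2 i + a))) * (1 - Real.exp (-(t * (p.2 i + a))))
def vB (a ϑ h : ℝ) (p : V) : ℝ :=
  ∑ i ∈ Finset.range p.1, Real.exp (-(ϑ * (p.2 i + a))) * (Real.exp (h * (p.2 i + a)) - 1)
def DB (a ϑ : ℝ) (p : V) : ℝ :=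
  ∑ i ∈ Finset.range p.1, Real.exp (-(ϑ * (p.2 i + a))) * (p.2 i + a)

lemma meas_sum {M : Type*} [AddCommMonoid M] [MeasurableSpace M] [MeasurableAdd₂ M]
    (F : ℝ → M) (hF : Measurable F) :
    Measurable fun p : V => ∑ i ∈ Finset.range p.1, F (p.2 i) := by
  have : Measurable fun q : (ℕ → ℝ) × ℕ => ∑ i ∈ Finset.range q.2, F (q.1 i) := by
    apply measurable_from_prod_countable_left
    intro n
    dsimp only
    exact Finset.measurable_sum _ fun i _ => hF.comp (measurable_pi_apply i)
  exact this.comp measurable_swap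

lemma meas_fB (a ϑ : ℝ) : Measurable (fB a ϑ) :=
  meas_sum (fun x => Real.exp (-(ϑ * (x + a)))) (by fun_prop)
lemma meas_wB (a ϑ t : ℝ) : Measurable (wB a ϑ t) :=
  meas_sum (fun x => Real.exp (-(ϑ * (x + a))) * (1 - Real.exp (-(t * (x + a))))) (by fun_prop)
lemma meas_vB (a ϑ h : ℝ) : Measurable (vB a ϑ h) :=
  meas_sum (fun x => Real.exp (-(ϑ * (x + a))) * (Real.exp (h * (x + a)) - 1)) (by fun_prop)
lemma meas_DB (a ϑ : ℝ) : Measurable (DB a ϑ) :=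
  meas_sum (fun x => Real.exp (-(ϑ * (x + a))) * (x + a)) (by fun_prop)

lemma fB_split (a ϑ t : ℝ) (p : V) : fB a ϑ p = fB a (ϑ + t) p + wB a ϑ t p := by
  rw [fB, fB, wB, ← Finset.sum_add_distrib]
  refine Finset.sum_congr rfl fun i _ => ?_
  rw [show -((ϑ + t) * (p.2 i + a)) = -(ϑ * (p.2 i + a)) + -(t * (p.2 i + a)) by ring,
    Real.exp_add]
  ring

lemma fB_split' (a ϑ h : ℝ) (p : V) : fB a (ϑ - h) p = fB a ϑ p + vB a ϑ h p := by
  rw [fB, fB, vB, ← Finset.sum_add_distrib]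
  refine Finset.sum_congr rfl fun i _ => ?_
  rw [show -((ϑ - h) * (p.2 i + a)) = -(ϑ * (p.2 i + a)) + h * (p.2 i + a) by ring,
    Real.exp_add]
  ring

lemma fB_nonneg (a ϑ : ℝ) (p : V) : 0 ≤ fB a ϑ p :=
  Finset.sum_nonneg fun i _ => (Real.exp_pos _).le

lemma wB_nonneg {a ϑ t : ℝ} (ht : 0 < t) {p : V}
    (hp : ∀ i ∈ Finset.range p.1, 0 < p.2 i + a) : 0 ≤ wB a ϑ t p := by
  refine Finset.sum_nonneg fun i hi => mul_nonneg (Real.exp_pos _).le ?_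
  have h1 : Real.exp (-(t * (p.2 i + a))) ≤ 1 := by
    rw [Real.exp_le_one_iff]
    have := hp i hi
    nlinarith
  linarith

lemma vB_nonneg {a ϑ h : ℝ} (hh : 0 < h) {p : V}
    (hp : ∀ i ∈ Finset.range p.1, 0 < p.2 i + a) : 0 ≤ vB a ϑ h p := by
  refine Finset.sum_nonneg fun i hi => mul_nonneg (Real.exp_pos _).le ?_
  have h1 : 1 ≤ Real.exp (h * (p.2 i + a)) := by
    rw [Real.one_le_exp_iff]
    have := hp i hi
    positivity
  linarith
lemma exp_convex_aux {y l : ℝ} (h0 : 0 ≤ l) (h1 : l ≤ 1) :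
    Real.exp (l * y) ≤ l * Real.exp y + (1 - l) := by
  have h := convexOn_exp.2 (Set.mem_univ y) (Set.mem_univ 0) h0
    (by linarith : (0:ℝ) ≤ 1 - l) (by ring)
  simpa using h

lemma slope1 {X t t' : ℝ} (h1 : 0 < t) (h2 : t ≤ t') :
    (1 - Real.exp (-(t' * X))) / t' ≤ (1 - Real.exp (-(t * X))) / t := by
  have ht' : 0 < t' := h1.trans_le h2
  have hl0 : 0 ≤ t / t' := by positivity
  have hl1 : t / t' ≤ 1 := (div_le_one ht').2 h2
  have key := exp_convex_aux (y := -(t' * X)) hl0 hl1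
  have e1 : t / t' * -(t' * X) = -(t * X) := by field_simp
  rw [e1] at key
  have h4 := mul_le_mul_of_nonneg_left key ht'.le
  have e2 : t' * (t / t' * Real.exp (-(t' * X)) + (1 - t / t'))
      = t * Real.exp (-(t' * X)) + (t' - t) := by field_simp
  rw [e2] at h4
  rw [div_le_div_iff₀ ht' h1]
  nlinarith
lemma slope2 {X t : ℝ} (ht : 0 < t) (_hX : 0 ≤ X) :
    (1 - Real.exp (-(t * X))) / t ≤ X := by
  have := Real.add_one_le_exp (-(t * X))
  rw [div_le_iff₀ ht]
  nlinarith

lemma slope3 {X h : ℝ} (hh : 0 < h) : X ≤ (Real.exp (h * X) - 1) / h := by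
  have := Real.add_one_le_exp (h * X)
  rw [le_div_iff₀ hh]
  nlinarith

lemma slope4 {X h h' : ℝ} (h1 : 0 < h) (h2 : h ≤ h') :
    (Real.exp (h * X) - 1) / h ≤ (Real.exp (h' * X) - 1) / h' := by
  have hh' : 0 < h' := h1.trans_le h2
  have hl0 : 0 ≤ h / h' := by positivity
  have hl1 : h / h' ≤ 1 := (div_le_one hh').2 h2
  have key := exp_convex_aux (y := h' * X) hl0 hl1
  have e1 : h / h' * (h' * X) = h * X := by field_simp
  rw [e1] at key
  have h4 := mul_le_mul_of_nonneg_left key hh'.le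
  have e2 : h' * (h / h' * Real.exp (h' * X) + (1 - h / h'))
      = h * Real.exp (h' * X) + (h' - h) := by field_simp
  rw [e2] at h4
  rw [div_le_div_iff₀ h1 hh']
  nlinarith

lemma slope_tendsto_right (X : ℝ) {t : ℕ → ℝ} (ht : Tendsto t atTop (𝓝 0))
    (ht' : ∀ n, t n ≠ 0) :
    Tendsto (fun n => (1 - Real.exp (-(t n * X))) / t n) atTop (𝓝 X) := by
  have hd : HasDerivAt (fun s : ℝ => 1 - Real.exp (-(s * X))) X 0 := by
    have h1 : HasDerivAt (fun s : ℝ => -(s * X)) (-X) 0 := by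
      simpa [neg_mul] using (hasDerivAt_neg (0:ℝ)).mul_const X
    have h2 := h1.exp
    have h3 := h2.const_sub (1:ℝ)
    simpa using h3
  have hs := hasDerivAt_iff_tendsto_slope.1 hd
  have hcomp : Tendsto t atTop (𝓝[≠] (0:ℝ)) :=
    tendsto_nhdsWithin_of_tendsto_nhds_of_eventually_within _ ht
      (Eventually.of_forall fun n => ht' n)
  refine (hs.comp hcomp).congr fun n => ?_
  simp [slope, div_eq_inv_mul]

lemma slope_tendsto_left (X : ℝ) {t : ℕ → ℝ} (ht : Tendsto t atTop (𝓝 0))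
    (ht' : ∀ n, t n ≠ 0) :
    Tendsto (fun n => (Real.exp (t n * X) - 1) / t n) atTop (𝓝 X) := by
  have hd : HasDerivAt (fun s : ℝ => Real.exp (s * X) - 1) X 0 := by
    have h1 : HasDerivAt (fun s : ℝ => s * X) X 0 := by
      simpa using (hasDerivAt_id (0:ℝ)).mul_const X
    have h2 := h1.exp
    have h3 := h2.sub_const 1
    simpa using h3
  have hs := hasDerivAt_iff_tendsto_slope.1 hd
  have hcomp : Tendsto t atTop (𝓝[≠] (0:ℝ)) :=
    tendsto_nhdsWithin_of_tendsto_nhds_of_eventually_within _ ht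
      (Eventually.of_forall fun n => ht' n)
  refine (hs.comp hcomp).congr fun n => ?_
  simp [slope, div_eq_inv_mul]
-- pointwise sum inequalities
lemma wB_mono {a ϑ t t' : ℝ} (h1 : 0 < t) (h2 : t ≤ t') (p : V) :
    t'⁻¹ * wB a ϑ t' p ≤ t⁻¹ * wB a ϑ t p := by
  rw [wB, wB, Finset.mul_sum, Finset.mul_sum]
  refine Finset.sum_le_sum fun i _ => ?_
  set X := p.2 i + a
  have h3 : Real.exp (-(ϑ * X)) * ((1 - Real.exp (-(t' * X))) / t')
      ≤ Real.exp (-(ϑ * X)) * ((1 - Real.exp (-(t * X))) / t) :=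
    mul_le_mul_of_nonneg_left (slope1 h1 h2) (Real.exp_pos _).le
  calc t'⁻¹ * (Real.exp (-(ϑ * X)) * (1 - Real.exp (-(t' * X))))
      = Real.exp (-(ϑ * X)) * ((1 - Real.exp (-(t' * X))) / t') := by ring
    _ ≤ Real.exp (-(ϑ * X)) * ((1 - Real.exp (-(t * X))) / t) := h3
    _ = t⁻¹ * (Real.exp (-(ϑ * X)) * (1 - Real.exp (-(t * X)))) := by ring

lemma wB_le_DB {a ϑ t : ℝ} (ht : 0 < t) {p : V}
    (hp : ∀ i ∈ Finset.range p.1, 0 < p.2 i + a) :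
    t⁻¹ * wB a ϑ t p ≤ DB a ϑ p := by
  rw [wB, DB, Finset.mul_sum]
  refine Finset.sum_le_sum fun i hi => ?_
  set X := p.2 i + a
  have h3 : Real.exp (-(ϑ * X)) * ((1 - Real.exp (-(t * X))) / t)
      ≤ Real.exp (-(ϑ * X)) * X :=
    mul_le_mul_of_nonneg_left (slope2 ht (hp i hi).le) (Real.exp_pos _).le
  calc t⁻¹ * (Real.exp (-(ϑ * X)) * (1 - Real.exp (-(t * X))))
      = Real.exp (-(ϑ * X)) * ((1 - Real.exp (-(t * X))) / t) := by ring
    _ ≤ Real.exp (-(ϑ * X)) * X := h3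

lemma DB_le_vB {a ϑ h : ℝ} (hh : 0 < h) (p : V) :
    DB a ϑ p ≤ h⁻¹ * vB a ϑ h p := by
  rw [vB, DB, Finset.mul_sum]
  refine Finset.sum_le_sum fun i _ => ?_
  set X := p.2 i + a
  have h3 : Real.exp (-(ϑ * X)) * X
      ≤ Real.exp (-(ϑ * X)) * ((Real.exp (h * X) - 1) / h) :=
    mul_le_mul_of_nonneg_left (slope3 hh) (Real.exp_pos _).le
  calc Real.exp (-(ϑ * X)) * X
      ≤ Real.exp (-(ϑ * X)) * ((Real.exp (h * X) - 1) / h) := h3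
    _ = h⁻¹ * (Real.exp (-(ϑ * X)) * (Real.exp (h * X) - 1)) := by ring

lemma vB_mono {a ϑ h h' : ℝ} (h1 : 0 < h) (h2 : h ≤ h') (p : V) :
    h⁻¹ * vB a ϑ h p ≤ h'⁻¹ * vB a ϑ h' p := by
  rw [vB, vB, Finset.mul_sum, Finset.mul_sum]
  refine Finset.sum_le_sum fun i _ => ?_
  set X := p.2 i + a
  have h3 : Real.exp (-(ϑ * X)) * ((Real.exp (h * X) - 1) / h)
      ≤ Real.exp (-(ϑ * X)) * ((Real.exp (h' * X) - 1) / h') :=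
    mul_le_mul_of_nonneg_left (slope4 h1 h2) (Real.exp_pos _).le
  calc h⁻¹ * (Real.exp (-(ϑ * X)) * (Real.exp (h * X) - 1))
      = Real.exp (-(ϑ * X)) * ((Real.exp (h * X) - 1) / h) := by ring
    _ ≤ Real.exp (-(ϑ * X)) * ((Real.exp (h' * X) - 1) / h') := h3
    _ = h'⁻¹ * (Real.exp (-(ϑ * X)) * (Real.exp (h' * X) - 1)) := by ring

lemma wB_tendsto (a ϑ : ℝ) {t : ℕ → ℝ} (ht : Tendsto t atTop (𝓝 0))
    (ht' : ∀ n, t n ≠ 0) (p : V) :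
    Tendsto (fun n => (t n)⁻¹ * wB a ϑ (t n) p) atTop (𝓝 (DB a ϑ p)) := by
  have : Tendsto (fun n => ∑ i ∈ Finset.range p.1,
      Real.exp (-(ϑ * (p.2 i + a))) * ((1 - Real.exp (-(t n * (p.2 i + a)))) / t n))
      atTop (𝓝 (DB a ϑ p)) := by
    rw [DB]
    refine tendsto_finset_sum _ fun i _ => ?_
    exact (slope_tendsto_right (p.2 i + a) ht ht').const_mul _
  refine this.congr fun n => ?_
  rw [wB, Finset.mul_sum]
  exact Finset.sum_congr rfl fun i _ => by ring

lemma vB_tendsto (a ϑ : ℝ) {t : ℕ → ℝ} (ht : Tendsto t atTop (𝓝 0))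
    (ht' : ∀ n, t n ≠ 0) (p : V) :
    Tendsto (fun n => (t n)⁻¹ * vB a ϑ (t n) p) atTop (𝓝 (DB a ϑ p)) := by
  have : Tendsto (fun n => ∑ i ∈ Finset.range p.1,
      Real.exp (-(ϑ * (p.2 i + a))) * ((Real.exp (t n * (p.2 i + a)) - 1) / t n))
      atTop (𝓝 (DB a ϑ p)) := by
    rw [DB]
    refine tendsto_finset_sum _ fun i _ => ?_
    exact (slope_tendsto_left (p.2 i + a) ht ht').const_mul _
  refine this.congr fun n => ?_
  rw [vB, Finset.mul_sum]
  exact Finset.sum_congr rfl fun i _ => by ring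
def LB (m : Measure V) (a θ : ℝ) : ENNReal := ∫⁻ p, ENNReal.ofReal (fB a θ p) ∂m
def WB (m : Measure V) (a ϑ t : ℝ) : ENNReal := ∫⁻ p, ENNReal.ofReal (wB a ϑ t p) ∂m
def VB (m : Measure V) (a ϑ h : ℝ) : ENNReal := ∫⁻ p, ENNReal.ofReal (vB a ϑ h p) ∂m
def UB (m : Measure V) (a ϑ t : ℝ) : ENNReal := ∫⁻ p, ENNReal.ofReal (t⁻¹ * wB a ϑ t p) ∂m
def UB' (m : Measure V) (a ϑ h : ℝ) : ENNReal := ∫⁻ p, ENNReal.ofReal (h⁻¹ * vB a ϑ h p) ∂m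
def CB (m : Measure V) (a ϑ : ℝ) : ENNReal := ∫⁻ p, ENNReal.ofReal (DB a ϑ p) ∂m

lemma LB_eq (m : Measure V) (a θ : ℝ) :
    LB m a θ = ENNReal.ofReal (Real.exp (-(θ * a))) * L m θ := by
  have hpt : ∀ p : V, ENNReal.ofReal (fB a θ p) = ENNReal.ofReal (Real.exp (-(θ * a))) *
      ENNReal.ofReal (∑ i ∈ Finset.range p.1, Real.exp (-θ * p.2 i)) := by
    intro p
    rw [← ENNReal.ofReal_mul (Real.exp_pos _).le]
    congr 1
    rw [fB, Finset.mul_sum]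
    refine Finset.sum_congr rfl fun i _ => ?_
    rw [← Real.exp_add]
    congr 1
    ring
  have hmeas : Measurable fun p : V =>
      ENNReal.ofReal (∑ i ∈ Finset.range p.1, Real.exp (-θ * p.2 i)) :=
    (meas_sum (fun x => Real.exp (-θ * x)) (by fun_prop)).ennreal_ofReal
  rw [LB, lintegral_congr hpt, L, lintegral_const_mul _ hmeas]

lemma LB_add (m : Measure V) {a ϑ t : ℝ} (ht : 0 < t)
    (hae : ∀ᵐ p ∂m, ∀ i ∈ Finset.range p.1, 0 < p.2 i + a) :
    LB m a ϑ = LB m a (ϑ + t) + WB m a ϑ t := by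
  have hmeas : Measurable fun p : V => ENNReal.ofReal (fB a (ϑ + t) p) :=
    (meas_fB a (ϑ + t)).ennreal_ofReal
  have hpt : ∀ᵐ p ∂m, ENNReal.ofReal (fB a ϑ p)
      = ENNReal.ofReal (fB a (ϑ + t) p) + ENNReal.ofReal (wB a ϑ t p) := by
    filter_upwards [hae] with p hp
    rw [fB_split a ϑ t p, ENNReal.ofReal_add (fB_nonneg _ _ _) (wB_nonneg ht hp)]
  rw [LB, lintegral_congr_ae hpt, lintegral_add_left hmeas]
  rfl

lemma LB_add' (m : Measure V) {a ϑ h : ℝ} (hh : 0 < h)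
    (hae : ∀ᵐ p ∂m, ∀ i ∈ Finset.range p.1, 0 < p.2 i + a) :
    LB m a (ϑ - h) = LB m a ϑ + VB m a ϑ h := by
  have hmeas : Measurable fun p : V => ENNReal.ofReal (fB a ϑ p) :=
    (meas_fB a ϑ).ennreal_ofReal
  have hpt : ∀ᵐ p ∂m, ENNReal.ofReal (fB a (ϑ - h) p)
      = ENNReal.ofReal (fB a ϑ p) + ENNReal.ofReal (vB a ϑ h p) := by
    filter_upwards [hae] with p hp
    rw [fB_split' a ϑ h p, ENNReal.ofReal_add (fB_nonneg _ _ _) (vB_nonneg hh hp)]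
  rw [LB, lintegral_congr_ae hpt, lintegral_add_left hmeas]
  rfl

lemma UB_eq (m : Measure V) (a ϑ : ℝ) {t : ℝ} (ht : 0 < t) :
    UB m a ϑ t = ENNReal.ofReal t⁻¹ * WB m a ϑ t := by
  have hmeas : Measurable fun p : V => ENNReal.ofReal (wB a ϑ t p) :=
    (meas_wB a ϑ t).ennreal_ofReal
  rw [UB, WB, ← lintegral_const_mul _ hmeas]
  refine lintegral_congr fun p => ?_
  rw [← ENNReal.ofReal_mul (by positivity)]

lemma UB'_eq (m : Measure V) (a ϑ : ℝ) {h : ℝ} (hh : 0 < h) :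
    UB' m a ϑ h = ENNReal.ofReal h⁻¹ * VB m a ϑ h := by
  have hmeas : Measurable fun p : V => ENNReal.ofReal (vB a ϑ h p) :=
    (meas_vB a ϑ h).ennreal_ofReal
  rw [UB', VB, ← lintegral_const_mul _ hmeas]
  refine lintegral_congr fun p => ?_
  rw [← ENNReal.ofReal_mul (by positivity)]

lemma UB_anti (m : Measure V) (a ϑ : ℝ) {t t' : ℝ} (h1 : 0 < t) (h2 : t ≤ t') :
    UB m a ϑ t' ≤ UB m a ϑ t :=
  lintegral_mono fun p => ENNReal.ofReal_le_ofReal (wB_mono h1 h2 p)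

lemma UB_le_CB (m : Measure V) {a ϑ t : ℝ} (ht : 0 < t)
    (hae : ∀ᵐ p ∂m, ∀ i ∈ Finset.range p.1, 0 < p.2 i + a) :
    UB m a ϑ t ≤ CB m a ϑ := by
  refine lintegral_mono_ae ?_
  filter_upwards [hae] with p hp
  exact ENNReal.ofReal_le_ofReal (wB_le_DB ht hp)

lemma CB_le_UB' (m : Measure V) {a ϑ h : ℝ} (hh : 0 < h) :
    CB m a ϑ ≤ UB' m a ϑ h :=
  lintegral_mono fun p => ENNReal.ofReal_le_ofReal (DB_le_vB hh p)

lemma UB'_mono (m : Measure V) (a ϑ : ℝ) {h h' : ℝ} (h1 : 0 < h) (h2 : h ≤ h') :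
    UB' m a ϑ h ≤ UB' m a ϑ h' :=
  lintegral_mono fun p => ENNReal.ofReal_le_ofReal (vB_mono h1 h2 p)

lemma UB_tendsto (m : Measure V) (a ϑ : ℝ) {t : ℕ → ℝ} (htpos : ∀ n, 0 < t n)
    (htanti : ∀ {i j : ℕ}, i ≤ j → t j ≤ t i) (httend : Tendsto t atTop (𝓝 0)) :
    Tendsto (fun n => UB m a ϑ (t n)) atTop (𝓝 (CB m a ϑ)) := by
  apply lintegral_tendsto_of_tendsto_of_monotone
  · intro n
    exact (((meas_wB a ϑ (t n)).const_mul _).ennreal_ofReal).aemeasurable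
  · refine Eventually.of_forall fun p i j hij => ?_
    exact ENNReal.ofReal_le_ofReal (wB_mono (htpos j) (htanti hij) p)
  · exact Eventually.of_forall fun p => (ENNReal.continuous_ofReal.tendsto _).comp
      (wB_tendsto a ϑ httend (fun n => (htpos n).ne') p)

lemma UB'_tendsto (m : Measure V) (a ϑ : ℝ) {t : ℕ → ℝ} (htpos : ∀ n, 0 < t n)
    (htanti : ∀ {i j : ℕ}, i ≤ j → t j ≤ t i) (httend : Tendsto t atTop (𝓝 0))
    (hfin0 : UB' m a ϑ (t 0) ≠ ⊤) :
    Tendsto (fun n => UB' m a ϑ (t n)) atTop (𝓝 (CB m a ϑ)) := by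
  apply lintegral_tendsto_of_tendsto_of_antitone
  · intro n
    exact (((meas_vB a ϑ (t n)).const_mul _).ennreal_ofReal).aemeasurable
  · refine Eventually.of_forall fun p i j hij => ?_
    exact ENNReal.ofReal_le_ofReal (vB_mono (htpos j) (htanti hij) p)
  · exact hfin0
  · exact Eventually.of_forall fun p => (ENNReal.continuous_ofReal.tendsto _).comp
      (vB_tendsto a ϑ httend (fun n => (htpos n).ne') p)
lemma slope_helper {g : ℝ → ℝ} {x s W : ℝ} (hs : s ≠ 0) (htr : g x = g (x + s) + W) :
    slope g x (x + s) = -(s⁻¹ * W) := by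
  rw [slope_def_field, htr, show x + s - x = s from by ring,
    show g (x + s) - (g (x + s) + W) = -W from by ring]
  field_simp

lemma slope_helper' {g : ℝ → ℝ} {x s V : ℝ} (hs : s ≠ 0) (htr : g (x - s) = g x + V) :
    slope g x (x - s) = -(s⁻¹ * V) := by
  rw [slope_def_field, htr, show x - s - x = -s from by ring,
    show g x + V - g x = V from by ring]
  field_simp
lemma key (m : Measure V) (ϑ ε a : ℝ) (hε : 0 < ε)
    (hfin : ∀ θ ∈ Set.Ioo (ϑ - ε) (ϑ + ε), 0 < L m θ ∧ L m θ < ⊤)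
    (hae : ∀ᵐ p ∂m, ∀ i ∈ Finset.range p.1, 0 < p.2 i + a) :
    deriv (kap m) ϑ < a := by
  have hϑmem : ϑ ∈ Set.Ioo (ϑ - ε) (ϑ + ε) := ⟨by linarith, by linarith⟩
  -- LB finiteness/positivity on the interval
  have hLB : ∀ θ ∈ Set.Ioo (ϑ - ε) (ϑ + ε), 0 < LB m a θ ∧ LB m a θ < ⊤ := by
    intro θ hθ
    rw [LB_eq]
    have he : 0 < ENNReal.ofReal (Real.exp (-(θ * a))) := ENNReal.ofReal_pos.2 (Real.exp_pos _)
    obtain ⟨h1, h2⟩ := hfin θ hθ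
    constructor
    · exact ENNReal.mul_pos he.ne' h1.ne'
    · exact ENNReal.mul_lt_top ENNReal.ofReal_lt_top h2
  have hLBϑfin : LB m a ϑ ≠ ⊤ := (hLB ϑ hϑmem).2.ne
  -- finiteness of VB, UB', CB
  have hVBfin : ∀ s : ℝ, 0 < s → s < ε → VB m a ϑ s ≠ ⊤ := by
    intro s hs hsε
    have hmem : ϑ - s ∈ Set.Ioo (ϑ - ε) (ϑ + ε) := ⟨by linarith, by linarith⟩
    have h3 := LB_add' m (a := a) (ϑ := ϑ) hs hae
    exact ne_top_of_le_ne_top (hLB _ hmem).2.ne (h3 ▸ le_add_self)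
  have hUB'fin : ∀ s : ℝ, 0 < s → s < ε → UB' m a ϑ s ≠ ⊤ := by
    intro s hs hsε
    rw [UB'_eq m a ϑ hs]
    exact (ENNReal.mul_lt_top ENNReal.ofReal_lt_top (hVBfin s hs hsε).lt_top).ne
  have hCBfin : CB m a ϑ ≠ ⊤ :=
    ne_top_of_le_ne_top (hUB'fin (ε/2) (by positivity) (by linarith))
      (CB_le_UB' m (by positivity))
  have hWBfin : ∀ s : ℝ, 0 < s → s < ε → WB m a ϑ s ≠ ⊤ := by
    intro s hs hsε
    have h3 := LB_add m (a := a) (ϑ := ϑ) hs hae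
    exact ne_top_of_le_ne_top hLBϑfin (h3 ▸ le_add_self)
  have hUBfin : ∀ s : ℝ, 0 < s → s < ε → UB m a ϑ s ≠ ⊤ := by
    intro s hs hsε
    rw [UB_eq m a ϑ hs]
    exact (ENNReal.mul_lt_top ENNReal.ofReal_lt_top (hWBfin s hs hsε).lt_top).ne
  -- positivity of CB
  have hCBpos : 0 < CB m a ϑ := by
    rcases eq_zero_or_pos (CB m a ϑ) with h0 | h
    · exfalso
      have hDB0 : ∀ᵐ p ∂m, ENNReal.ofReal (DB a ϑ p) = 0 :=
        (lintegral_eq_zero_iff (meas_DB a ϑ).ennreal_ofReal).1 h0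
      have hfB0 : ∀ᵐ p ∂m, ENNReal.ofReal (fB a ϑ p) = 0 := by
        filter_upwards [hDB0, hae] with p h1 h2
        have hD : DB a ϑ p ≤ 0 := by
          rw [ENNReal.ofReal_eq_zero] at h1
          exact h1
        rcases Nat.eq_zero_or_pos p.1 with hn | hn
        · simp [fB, hn]
        · exfalso
          have hpos : 0 < DB a ϑ p := by
            rw [DB]
            refine Finset.sum_pos (fun i hi => ?_) ?_
            · exact mul_pos (Real.exp_pos _) (h2 i hi)
            · exact Finset.nonempty_range_iff.2 hn.ne'
          linarith
      have : LB m a ϑ = 0 := by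
        rw [LB, lintegral_congr_ae hfB0, lintegral_zero]
      exact (hLB ϑ hϑmem).1.ne' this
    · exact h
  set c : ℝ := (CB m a ϑ).toReal with hc
  have hcpos : 0 < c := ENNReal.toReal_pos hCBpos.ne' hCBfin
  -- the sequence
  set t : ℕ → ℝ := fun n => (ε/2) / (n+1) with htdef
  have htpos : ∀ n : ℕ, 0 < t n := fun n => by positivity
  have htle : ∀ n : ℕ, t n ≤ ε/2 := fun n => by
    apply div_le_self (by positivity)
    have : (0:ℝ) ≤ n := Nat.cast_nonneg n
    linarith
  have htlt : ∀ n : ℕ, t n < ε := fun n => lt_of_le_of_lt (htle n) (by linarith)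
  have htanti : ∀ {i j : ℕ}, i ≤ j → t j ≤ t i := by
    intro i j hij
    apply div_le_div_of_nonneg_left (by positivity) (by positivity)
    have : (i:ℝ) ≤ j := Nat.cast_le.2 hij
    linarith
  have httend : Tendsto t atTop (𝓝 0) := by
    have h0 : Tendsto (fun n : ℕ => 1 / ((n:ℝ) + 1)) atTop (𝓝 0) :=
      tendsto_one_div_add_atTop_nhds_zero_nat
    have := h0.const_mul (ε/2)
    simp only [mul_zero] at this
    refine this.congr fun n => ?_
    rw [htdef]
    ring
  -- convergence of UB and UB'
  have hUBt := UB_tendsto m a ϑ htpos (fun {i j} => htanti) httend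
  have hUB't := UB'_tendsto m a ϑ htpos (fun {i j} => htanti) httend
    (hUB'fin (t 0) (htpos 0) (htlt 0))
  have hUBtr : Tendsto (fun n => (UB m a ϑ (t n)).toReal) atTop (𝓝 c) :=
    (ENNReal.tendsto_toReal hCBfin).comp hUBt
  have hUB'tr : Tendsto (fun n => (UB' m a ϑ (t n)).toReal) atTop (𝓝 c) :=
    (ENNReal.tendsto_toReal hCBfin).comp hUB't
  -- slope identities
  set gB : ℝ → ℝ := fun θ => (LB m a θ).toReal with hgBdef
  have slope_right : ∀ s : ℝ, 0 < s → s < ε → slope gB ϑ (ϑ + s) = -(UB m a ϑ s).toReal := by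
    intro s hs hsε
    have hW := LB_add m (a := a) (ϑ := ϑ) hs hae
    have hmem : ϑ + s ∈ Set.Ioo (ϑ - ε) (ϑ + ε) := ⟨by linarith, by linarith⟩
    have htr : gB ϑ = gB (ϑ + s) + (WB m a ϑ s).toReal := by
      rw [hgBdef]
      dsimp only
      rw [hW, ENNReal.toReal_add (hLB _ hmem).2.ne (hWBfin s hs hsε)]
    have hUtr : (UB m a ϑ s).toReal = s⁻¹ * (WB m a ϑ s).toReal := by
      rw [UB_eq m a ϑ hs, ENNReal.toReal_mul, ENNReal.toReal_ofReal (by positivity)]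
    rw [hUtr]
    exact slope_helper hs.ne' htr
  have slope_left : ∀ s : ℝ, 0 < s → s < ε → slope gB ϑ (ϑ - s) = -(UB' m a ϑ s).toReal := by
    intro s hs hsε
    have hV := LB_add' m (a := a) (ϑ := ϑ) hs hae
    have hmem : ϑ - s ∈ Set.Ioo (ϑ - ε) (ϑ + ε) := ⟨by linarith, by linarith⟩
    have htr : gB (ϑ - s) = gB ϑ + (VB m a ϑ s).toReal := by
      rw [hgBdef]
      dsimp only
      rw [hV, ENNReal.toReal_add hLBϑfin (hVBfin s hs hsε)]
    have hUtr : (UB' m a ϑ s).toReal = s⁻¹ * (VB m a ϑ s).toReal := by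
      rw [UB'_eq m a ϑ hs, ENNReal.toReal_mul, ENNReal.toReal_ofReal (by positivity)]
    rw [hUtr]
    exact slope_helper' hs.ne' htr
  -- the derivative of gB
  have hgBderiv : HasDerivAt gB (-c) ϑ := by
    rw [hasDerivAt_iff_tendsto_slope, Metric.tendsto_nhdsWithin_nhds]
    intro ε' hε'
    obtain ⟨n1, hn1⟩ := (hUBtr.eventually (eventually_gt_nhds (show c - ε' < c by linarith))).exists
    obtain ⟨n2, hn2⟩ := (hUB'tr.eventually (eventually_lt_nhds (show c < c + ε' by linarith))).exists
    refine ⟨min (t n1) (t n2), lt_min (htpos n1) (htpos n2), ?_⟩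
    intro y hy hdist
    have hyne : y ≠ ϑ := hy
    rw [Real.dist_eq] at hdist ⊢
    rcases lt_or_gt_of_ne hyne with hlt | hgt
    · -- y < ϑ, left side
      set s := ϑ - y with hs
      have hs0 : 0 < s := by rw [hs]; linarith
      have hsn2 : s ≤ t n2 := by
        have : |y - ϑ| = s := by rw [abs_of_nonpos (by linarith)]; ring
        rw [this] at hdist
        exact le_trans hdist.le (min_le_right _ _)
      have hsε : s < ε := lt_of_le_of_lt hsn2 (htlt n2)
      have hyeq : y = ϑ - s := by rw [hs]; ring
      rw [hyeq, slope_left s hs0 hsε]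
      have hb1 : CB m a ϑ ≤ UB' m a ϑ s := CB_le_UB' m hs0
      have hb2 : UB' m a ϑ s ≤ UB' m a ϑ (t n2) := UB'_mono m a ϑ hs0 hsn2
      have hr1 : c ≤ (UB' m a ϑ s).toReal :=
        ENNReal.toReal_mono (hUB'fin s hs0 hsε) hb1
      have hr2 : (UB' m a ϑ s).toReal ≤ (UB' m a ϑ (t n2)).toReal :=
        ENNReal.toReal_mono (hUB'fin (t n2) (htpos n2) (htlt n2)) hb2
      have : (UB' m a ϑ (t n2)).toReal < c + ε' := hn2
      rw [abs_lt]
      constructor <;> [skip; skip] <;> nlinarith [hcpos]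
    · -- ϑ < y, right side
      set s := y - ϑ with hs
      have hs0 : 0 < s := by rw [hs]; linarith
      have hsn1 : s ≤ t n1 := by
        have : |y - ϑ| = s := abs_of_pos hs0
        rw [this] at hdist
        exact le_trans hdist.le (min_le_left _ _)
      have hsε : s < ε := lt_of_le_of_lt hsn1 (htlt n1)
      have hyeq : y = ϑ + s := by rw [hs]; ring
      rw [hyeq, slope_right s hs0 hsε]
      have hb1 : UB m a ϑ (t n1) ≤ UB m a ϑ s := UB_anti m a ϑ hs0 hsn1
      have hb2 : UB m a ϑ s ≤ CB m a ϑ := UB_le_CB m hs0 hae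
      have hr1 : (UB m a ϑ (t n1)).toReal ≤ (UB m a ϑ s).toReal :=
        ENNReal.toReal_mono (hUBfin s hs0 hsε) hb1
      have hr2 : (UB m a ϑ s).toReal ≤ c := ENNReal.toReal_mono hCBfin hb2
      have : c - ε' < (UB m a ϑ (t n1)).toReal := hn1
      rw [abs_lt]
      constructor <;> [skip; skip] <;> nlinarith [hcpos]
  -- transfer to L and kap
  have hgB : ∀ θ, (L m θ).toReal = Real.exp (θ * a) * gB θ := by
    intro θ
    rw [hgBdef]
    dsimp only
    rw [LB_eq, ENNReal.toReal_mul, ENNReal.toReal_ofReal (Real.exp_pos _).le,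
      ← mul_assoc, ← Real.exp_add]
    rw [show θ * a + -(θ * a) = 0 by ring, Real.exp_zero, one_mul]
  have hE : HasDerivAt (fun θ => Real.exp (θ * a)) (Real.exp (ϑ * a) * a) ϑ := by
    simpa using ((hasDerivAt_id ϑ).mul_const a).exp
  have hLderiv : HasDerivAt (fun θ => (L m θ).toReal)
      (Real.exp (ϑ * a) * a * gB ϑ + Real.exp (ϑ * a) * (-c)) ϑ := by
    rw [show (fun θ => (L m θ).toReal) = (fun θ => Real.exp (θ * a) * gB θ) from funext hgB]
    exact hE.mul hgBderiv
  have hℓpos : 0 < (L m ϑ).toReal :=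
    ENNReal.toReal_pos (hfin ϑ hϑmem).1.ne' (hfin ϑ hϑmem).2.ne
  have hkap : HasDerivAt (kap m)
      ((Real.exp (ϑ * a) * a * gB ϑ + Real.exp (ϑ * a) * (-c)) / (L m ϑ).toReal) ϑ := by
    have := hLderiv.log hℓpos.ne'
    exact this
  rw [hkap.deriv]
  have hgl : (L m ϑ).toReal = Real.exp (ϑ * a) * gB ϑ := hgB ϑ
  rw [div_lt_iff₀ hℓpos, hgl]
  nlinarith [mul_pos (Real.exp_pos (ϑ * a)) hcpos]

/-- if `κ_m(ϑ) = ϑ κ_m'(ϑ)` (boundary case), then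
`∫ ∑_{i<N} 1_{ϑζ_i + κ_m(ϑ) ≤ 0} dm > 0`; in particular the set of `(N,ζ)` admitting some
`i < N` with `ϑζ_i + κ_m(ϑ) ≤ 0` has positive `m`-measure. -/
theorem stmt_16 (m : Measure V) [IsProbabilityMeasure m] (ϑ : ℝ) (hϑ : 0 < ϑ)
    (hfin : ∃ ε > (0:ℝ), ∀ θ ∈ Set.Ioo (ϑ - ε) (ϑ + ε), 0 < L m θ ∧ L m θ < ⊤)
    (hcrit : kap m ϑ = ϑ * deriv (kap m) ϑ) :
    0 < (∫⁻ p, ∑ i ∈ Finset.range p.1,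
          (if ϑ * p.2 i + kap m ϑ ≤ 0 then (1 : ENNReal) else 0) ∂m) ∧
    0 < m {p : V | ∃ i ∈ Finset.range p.1, ϑ * p.2 i + kap m ϑ ≤ 0} := by
  obtain ⟨ε, hε, hfin'⟩ := hfin
  set a : ℝ := kap m ϑ / ϑ with ha
  have hI : 0 < (∫⁻ p, ∑ i ∈ Finset.range p.1,
      (if ϑ * p.2 i + kap m ϑ ≤ 0 then (1 : ENNReal) else 0) ∂m) := by
    by_contra hcon
    push_neg at hcon
    have hI0 : (∫⁻ p, ∑ i ∈ Finset.range p.1,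
        (if ϑ * p.2 i + kap m ϑ ≤ 0 then (1 : ENNReal) else 0) ∂m) = 0 :=
      le_antisymm hcon zero_le
    have hmeasF : Measurable fun x : ℝ => if ϑ * x + kap m ϑ ≤ 0 then (1 : ENNReal) else 0 := by
      refine Measurable.ite ?_ measurable_const measurable_const
      exact measurableSet_le (by fun_prop) measurable_const
    have hmeas : Measurable fun p : V => ∑ i ∈ Finset.range p.1,
        (if ϑ * p.2 i + kap m ϑ ≤ 0 then (1 : ENNReal) else 0) := meas_sum _ hmeasF
    have hae0 := (lintegral_eq_zero_iff hmeas).1 hI0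
    have hae : ∀ᵐ p ∂m, ∀ i ∈ Finset.range p.1, 0 < p.2 i + a := by
      filter_upwards [hae0] with p hp i hi
      have hterm := (Finset.sum_eq_zero_iff.1 hp) i hi
      have hcond : ¬ (ϑ * p.2 i + kap m ϑ ≤ 0) := by
        intro hcond
        rw [if_pos hcond] at hterm
        exact one_ne_zero hterm
      push_neg at hcond
      have h2 : 0 < (ϑ * p.2 i + kap m ϑ) / ϑ := div_pos hcond hϑ
      rwa [add_div, mul_div_cancel_left₀ _ hϑ.ne', ← ha] at h2
    have hderiv := key m ϑ ε a hε hfin' hae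
    have heq : deriv (kap m) ϑ = a := by
      rw [ha, hcrit]
      field_simp
    linarith
  refine ⟨hI, ?_⟩
  rw [pos_iff_ne_zero]
  intro hS0
  have hnotS : ∀ᵐ p ∂m,
      p ∉ {p : V | ∃ i ∈ Finset.range p.1, ϑ * p.2 i + kap m ϑ ≤ 0} := by
    rw [ae_iff]
    simpa [not_not] using hS0
  have hzero : (∫⁻ p, ∑ i ∈ Finset.range p.1,
      (if ϑ * p.2 i + kap m ϑ ≤ 0 then (1 : ENNReal) else 0) ∂m) = 0 := by
    have hptw : ∀ᵐ p ∂m, (∑ i ∈ Finset.range p.1,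
        (if ϑ * p.2 i + kap m ϑ ≤ 0 then (1 : ENNReal) else 0)) = 0 := by
      filter_upwards [hnotS] with p hp
      refine Finset.sum_eq_zero fun i hi => ?_
      rw [if_neg]
      intro hc
      exact hp ⟨i, hi, hc⟩
    rw [lintegral_congr_ae hptw, lintegral_zero]
  exact hI.ne' hzero

end
end
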